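/- Let $\tfrac13<\gamma<\tfrac12$, $\gamma'>0$ and $0\le\eta_1$ satisfy $\gamma+\gamma'-2\eta_1>1$ and $\eta_1<\gamma$. Let $X:[s,t]\to\mathbb{R}^n$ be $\gamma$-Hölder continuous with a two-parameter function $\mathbb{X}:\{(u,v):s\le u\le v\le t\}\to\mathbb{R}^{n\times n}$ such that $W_{\mathbf{X},\gamma,\eta_1}(s,t)<\infty$, and let $h:[s,t]\to\mathbb{R}^n$ be a continuous path of finite $\tfrac1{\gamma'}$-variation such that $W_{\mathbf{h},\gamma',\eta_1}(s,t)<\infty$, where $\mathbf{h}=(h,\int h\otimes dh)$ is the Young enhancement of $h$. Define the translated rough path $T_h(\mathbf{X})$ as the pair with first level $h+X$ and second level over $[u,v]$ given by $\mathbb{X}_{u,v}+\int_u^v (h_\tau-h_u)\otimes dh_\tau+\int_u^v (h_\tau-h_u)\otimes dX_\tau+\int_u^v (X_\tau-X_u)\otimes dh_\tau$, where all integrals are Young integrals. Then there is a constant $C<\infty$, depending only on $\gamma,\gamma',\eta_1$, such that $W_{T_h(\mathbf{X}),\gamma,\eta_1}(s,t)\le C\big[\,W_{\mathbf{X},\gamma,\eta_1}(s,t)+W_{\mathbf{h},\gamma',\eta_1}(s,t)^{(\gamma'-\eta_1)/(\gamma-\eta_1)}\,\big]$.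 -/

import Mathlib

open scoped ENNReal

/-- The control function `W_{(Y,𝕐),β,η₁}(s,t)` (supremum over finite partitions of
`[s,t]`) of a pair consisting of a path `Y` and a two-parameter function `𝕐`. -/
noncomputable def ctrlW (β η₁ : ℝ) (n : ℕ) (Y : ℝ → Fin n → ℝ)
    (YY : ℝ → ℝ → Fin n → Fin n → ℝ) (s t : ℝ) : ℝ≥0∞ :=
  ⨆ (m : ℕ) (κ : Fin (m + 1) → ℝ) (_ : StrictMono κ) (_ : κ 0 = s)
    (_ : κ (Fin.last m) = t),
    ∑ j : Fin m, ENNReal.ofReal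
      ((κ j.succ - κ j.castSucc) ^ (-η₁ / (β - η₁)) *
        (‖Y (κ j.succ) - Y (κ j.castSucc)‖ ^ (1 / (β - η₁)) +
          ‖YY (κ j.castSucc) (κ j.succ)‖ ^ (1 / (2 * (β - η₁)))))

/-- The Riemann sum `∑_j f(κ_j) ⊗ (g(κ_{j+1}) - g(κ_j))` along a partition. -/
noncomputable def riemannSum (n : ℕ) (f g : ℝ → Fin n → ℝ)
    {m : ℕ} (κ : Fin (m + 1) → ℝ) : Fin n → Fin n → ℝ :=
  ∑ j : Fin m, fun p q => f (κ j.castSucc) p * (g (κ j.succ) q - g (κ j.castSucc) q)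

/-- `HasYoungIntegral n f g s t I`: the Riemann sums of `∫_s^t f ⊗ dg` converge to `I`
as the mesh of the partition tends to `0`. -/
def HasYoungIntegral (n : ℕ) (f g : ℝ → Fin n → ℝ) (s t : ℝ)
    (I : Fin n → Fin n → ℝ) : Prop :=
  ∀ ε > (0 : ℝ), ∃ δ > (0 : ℝ), ∀ (m : ℕ) (κ : Fin (m + 1) → ℝ),
    StrictMono κ → κ 0 = s → κ (Fin.last m) = t →
    (∀ j : Fin m, κ j.succ - κ j.castSucc < δ) →
    ‖riemannSum n f g κ - I‖ < ε

namespace RP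

noncomputable def pw (β η₁ : ℝ) (n : ℕ) (Y : ℝ → Fin n → ℝ)
    (YY : ℝ → ℝ → Fin n → Fin n → ℝ) (a b : ℝ) : ℝ :=
  (b - a) ^ (-η₁ / (β - η₁)) *
    (‖Y b - Y a‖ ^ (1 / (β - η₁)) + ‖YY a b‖ ^ (1 / (2 * (β - η₁))))

variable {β η₁ : ℝ} {n : ℕ} {Y : ℝ → Fin n → ℝ} {YY : ℝ → ℝ → Fin n → Fin n → ℝ}

lemma pw_nonneg {a b : ℝ} (hab : a ≤ b) : 0 ≤ pw β η₁ n Y YY a b :=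
  mul_nonneg (Real.rpow_nonneg (by linarith) _)
    (add_nonneg (Real.rpow_nonneg (norm_nonneg _) _) (Real.rpow_nonneg (norm_nonneg _) _))


lemma fkc {k : ℕ} (f : Fin k → ℝ) {a b : ℕ} {ha : a < k} (h : a = b) (hb : b < k) :
    f ⟨a, ha⟩ = f ⟨b, hb⟩ := by congr 1; exact Fin.ext h

def glueFun {k l : ℕ} (κ1 : Fin (k + 1) → ℝ) (κ2 : Fin (l + 1) → ℝ)
    (j : Fin (k + l + 1)) : ℝ :=
  if _ : (j : ℕ) < k then κ1 ⟨j, by omega⟩ else κ2 ⟨(j : ℕ) - k, by have := j.isLt; omega⟩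

lemma glueFun_lt {k l : ℕ} (κ1 : Fin (k + 1) → ℝ) (κ2 : Fin (l + 1) → ℝ)
    {j : Fin (k + l + 1)} (h : (j : ℕ) < k) :
    glueFun κ1 κ2 j = κ1 ⟨j, by omega⟩ := dif_pos h

lemma glueFun_ge {k l : ℕ} (κ1 : Fin (k + 1) → ℝ) (κ2 : Fin (l + 1) → ℝ)
    {j : Fin (k + l + 1)} (h : k ≤ (j : ℕ)) :
    glueFun κ1 κ2 j = κ2 ⟨(j : ℕ) - k, by have := j.isLt; omega⟩ :=
  dif_neg (by omega)

lemma glueFun_le {k l : ℕ} {κ1 : Fin (k + 1) → ℝ} {κ2 : Fin (l + 1) → ℝ}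
    (hm : κ1 (Fin.last k) = κ2 0) {j : Fin (k + l + 1)} (h : (j : ℕ) ≤ k) :
    glueFun κ1 κ2 j = κ1 ⟨j, by omega⟩ := by
  rcases lt_or_eq_of_le h with h' | h'
  · exact glueFun_lt κ1 κ2 h'
  · rw [glueFun_ge κ1 κ2 (le_of_eq h'.symm), fkc κ2 (show (j:ℕ) - k = 0 by omega) (by omega),
      Fin.mk_zero, ← hm, fkc κ1 h' (by omega)]
    rfl

/-- A partition of `[s,t]`. -/
structure Pt (s t : ℝ) where
  m : ℕ
  κ : Fin (m + 1) → ℝ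
  mono : StrictMono κ
  h0 : κ 0 = s
  hl : κ (Fin.last m) = t

noncomputable def pSum (β η₁ : ℝ) (n : ℕ) (Y : ℝ → Fin n → ℝ)
    (YY : ℝ → ℝ → Fin n → Fin n → ℝ) {s t : ℝ} (P : Pt s t) : ℝ≥0∞ :=
  ∑ j : Fin P.m, ENNReal.ofReal (pw β η₁ n Y YY (P.κ j.castSucc) (P.κ j.succ))

lemma partSum_le {s t : ℝ} (P : Pt s t) :
    pSum β η₁ n Y YY P ≤ ctrlW β η₁ n Y YY s t := by
  rw [ctrlW]
  exact le_iSup_of_le P.m (le_iSup_of_le P.κ (le_iSup_of_le P.mono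
    (le_iSup_of_le P.h0 (le_iSup_of_le P.hl le_rfl))))

lemma ctrlW_eq (s t : ℝ) :
    ctrlW β η₁ n Y YY s t = ⨆ P : Pt s t, pSum β η₁ n Y YY P := by
  apply le_antisymm
  · rw [ctrlW]
    exact iSup_le fun m => iSup_le fun κ => iSup_le fun h1 => iSup_le fun h2 =>
      iSup_le fun h3 => le_iSup_of_le ⟨m, κ, h1, h2, h3⟩ le_rfl
  · exact iSup_le fun P => partSum_le P

lemma Pt.nonempty {s t : ℝ} (hst : s ≤ t) : Nonempty (Pt s t) := by
  rcases eq_or_lt_of_le hst with h | h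
  · subst h
    exact ⟨⟨0, fun _ => s, fun i j hij => absurd hij (by omega), rfl, rfl⟩⟩
  · refine ⟨⟨1, ![s, t], ?_, rfl, rfl⟩⟩
    rw [Fin.strictMono_iff_lt_succ]
    intro i
    fin_cases i
    simpa using h

/-- Gluing two partitions. -/
noncomputable def Pt.glue {s u t : ℝ} (P : Pt s u) (Q : Pt u t) : Pt s t := by
  have hm : P.κ (Fin.last P.m) = Q.κ 0 := by rw [P.hl, Q.h0]
  refine ⟨P.m + Q.m, glueFun P.κ Q.κ, ?_, ?_, ?_⟩
  · rw [Fin.strictMono_iff_lt_succ]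
    intro i
    have hcs : ((i.castSucc : Fin (P.m + Q.m + 1)) : ℕ) = (i : ℕ) := rfl
    have hsc : ((i.succ : Fin (P.m + Q.m + 1)) : ℕ) = (i : ℕ) + 1 := rfl
    rcases le_or_gt ((i : ℕ) + 1) P.m with hle | hlt
    · rw [glueFun_le hm (by omega), glueFun_le hm (by omega)]
      exact P.mono (by rw [Fin.mk_lt_mk, hcs, hsc]; omega)
    · rw [glueFun_ge P.κ Q.κ (by omega), glueFun_ge P.κ Q.κ (by omega)]
      exact Q.mono (by rw [Fin.mk_lt_mk]; omega)
  · rw [glueFun_le hm (by simp), fkc P.κ (show ((0 : Fin (P.m + Q.m + 1)) : ℕ) = 0 by simp) (by omega),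
      Fin.mk_zero, P.h0]
  · rw [glueFun_ge P.κ Q.κ (by simp),
      fkc Q.κ (show ((Fin.last (P.m + Q.m) : Fin (P.m + Q.m + 1)) : ℕ) - P.m = Q.m by simp) (by omega)]
    exact Q.hl

lemma pSum_glue {s u t : ℝ} (P : Pt s u) (Q : Pt u t) :
    pSum β η₁ n Y YY (P.glue Q) = pSum β η₁ n Y YY P + pSum β η₁ n Y YY Q := by
  have hm : P.κ (Fin.last P.m) = Q.κ 0 := by rw [P.hl, Q.h0]
  unfold pSum Pt.glue
  simp only
  rw [Fin.sum_univ_add]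
  congr 1
  · apply Finset.sum_congr rfl
    intro j _
    have e1 : glueFun P.κ Q.κ ((Fin.castAdd Q.m j).castSucc) = P.κ j.castSucc := by
      rw [glueFun_le hm (by exact le_of_lt j.isLt)]
      exact fkc P.κ rfl j.castSucc.isLt
    have e2 : glueFun P.κ Q.κ ((Fin.castAdd Q.m j).succ) = P.κ j.succ := by
      rw [glueFun_le hm (by exact j.isLt)]
      exact fkc P.κ rfl j.succ.isLt
    rw [e1, e2]
  · apply Finset.sum_congr rfl
    intro j _
    have e1 : glueFun P.κ Q.κ ((Fin.natAdd P.m j).castSucc) = Q.κ j.castSucc := by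
      rw [glueFun_ge P.κ Q.κ (by simp)]
      exact fkc Q.κ (by simp) j.castSucc.isLt
    have e2 : glueFun P.κ Q.κ ((Fin.natAdd P.m j).succ) = Q.κ j.succ := by
      rw [glueFun_ge P.κ Q.κ (by show P.m ≤ P.m + (j:ℕ) + 1; omega)]
      exact fkc Q.κ (by show P.m + (j:ℕ) + 1 - P.m = (j:ℕ) + 1; omega) j.succ.isLt
    rw [e1, e2]

lemma ctrlW_superadd {s u t : ℝ} (hsu : s ≤ u) (hut : u ≤ t) :
    ctrlW β η₁ n Y YY s u + ctrlW β η₁ n Y YY u t ≤ ctrlW β η₁ n Y YY s t := by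
  haveI := Pt.nonempty hsu
  haveI := Pt.nonempty hut
  rw [ctrlW_eq s u, ctrlW_eq u t]
  rw [ENNReal.iSup_add]
  refine iSup_le fun P => ?_
  rw [ENNReal.add_iSup]
  refine iSup_le fun Q => ?_
  rw [← pSum_glue P Q]
  exact partSum_le _

lemma ctrlW_mono {s u v t : ℝ} (hsu : s ≤ u) (huv : u ≤ v) (hvt : v ≤ t) :
    ctrlW β η₁ n Y YY u v ≤ ctrlW β η₁ n Y YY s t :=
  calc ctrlW β η₁ n Y YY u v ≤ ctrlW β η₁ n Y YY s u + ctrlW β η₁ n Y YY u v := le_add_self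
    _ ≤ ctrlW β η₁ n Y YY s v := ctrlW_superadd hsu huv
    _ ≤ ctrlW β η₁ n Y YY s v + ctrlW β η₁ n Y YY v t := le_self_add
    _ ≤ ctrlW β η₁ n Y YY s t := ctrlW_superadd (le_trans hsu huv) hvt

/-- superadditivity along a chain -/
lemma ctrlW_chain : ∀ (m : ℕ) (κ : Fin (m + 1) → ℝ), StrictMono κ →
    ∑ j : Fin m, ctrlW β η₁ n Y YY (κ j.castSucc) (κ j.succ) ≤
      ctrlW β η₁ n Y YY (κ 0) (κ (Fin.last m)) := by
  intro m
  induction m with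
  | zero => intro κ _; simp
  | succ m ih =>
    intro κ hκ
    rw [Fin.sum_univ_succ]
    have h2 := ih (κ ∘ Fin.succ) (hκ.comp Fin.strictMono_succ)
    have key : ∑ j : Fin m, ctrlW β η₁ n Y YY (κ j.succ.castSucc) (κ j.succ.succ) ≤
        ctrlW β η₁ n Y YY (κ (0 : Fin (m+1)).succ) (κ (Fin.last m).succ) := by
      refine le_trans (le_of_eq ?_) h2
      apply Finset.sum_congr rfl
      intro j _
      congr 2 <;> simp [Fin.succ_castSucc]
    calc ctrlW β η₁ n Y YY (κ (0 : Fin (m+1)).castSucc) (κ (0 : Fin (m+1)).succ) +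
          ∑ j : Fin m, ctrlW β η₁ n Y YY (κ j.succ.castSucc) (κ j.succ.succ)
        ≤ ctrlW β η₁ n Y YY (κ 0) (κ (0 : Fin (m+1)).succ) +
          ctrlW β η₁ n Y YY (κ (0 : Fin (m+1)).succ) (κ (Fin.last (m+1))) := by
          rw [Fin.castSucc_zero]
          refine add_le_add le_rfl (le_trans key ?_)
          rw [Fin.succ_last]
      _ ≤ ctrlW β η₁ n Y YY (κ 0) (κ (Fin.last (m+1))) := by
          apply ctrlW_superadd
          · exact (hκ.monotone (Fin.zero_le _))
          · exact (hκ.monotone (Fin.le_last _))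

-- appended to part1 within namespace RP
lemma outer_norm_le {n : ℕ} (a b : Fin n → ℝ) :
    ‖(fun pp qq => a pp * b qq : Fin n → Fin n → ℝ)‖ ≤ ‖a‖ * ‖b‖ := by
  rw [pi_norm_le_iff_of_nonneg (by positivity)]
  intro pp
  rw [pi_norm_le_iff_of_nonneg (by positivity)]
  intro qq
  calc ‖a pp * b qq‖ = ‖a pp‖ * ‖b qq‖ := norm_mul _ _
    _ ≤ ‖a‖ * ‖b qq‖ := mul_le_mul_of_nonneg_right (norm_le_pi_norm a pp) (norm_nonneg _)
    _ ≤ ‖a‖ * ‖b‖ := mul_le_mul_of_nonneg_left (norm_le_pi_norm b qq) (norm_nonneg _)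

noncomputable def Kc (σ : ℝ) : ℝ := ∑' k : ℕ, ((k : ℝ) + 1) ^ (-σ)

lemma Kc_summable {σ : ℝ} (hσ : 1 < σ) :
    Summable (fun k : ℕ => ((k : ℝ) + 1) ^ (-σ)) := by
  have h := (Real.summable_nat_rpow_inv (p := σ)).2 hσ
  have h2 := (summable_nat_add_iff 1).2 h
  refine h2.congr fun k => ?_
  rw [Real.rpow_neg (by positivity)]
  push_cast
  rfl

lemma Kc_partial_le {σ : ℝ} (hσ : 1 < σ) (N : ℕ) :
    ∑ k ∈ Finset.range N, ((k : ℝ) + 1) ^ (-σ) ≤ Kc σ :=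
  Summable.sum_le_tsum _ (fun i _ => by positivity) (Kc_summable hσ)

lemma one_le_Kc {σ : ℝ} (hσ : 1 < σ) : 1 ≤ Kc σ := by
  have h := Summable.le_tsum (Kc_summable hσ) 0 (fun i _ => by positivity)
  simpa [Kc] using h

lemma incr_from_x {Δ w x η e : ℝ} (hΔ : 0 < Δ) (he : 0 < e) (hw : 0 ≤ w)
    (hx : Δ ^ (-(η / e)) * w ^ (1 / e) = x) : w ≤ Δ ^ η * x ^ e := by
  have hxnn : 0 ≤ x := by
    rw [← hx]; exact mul_nonneg (Real.rpow_nonneg hΔ.le _) (Real.rpow_nonneg hw _)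
  have h1 : w ^ (1 / e) = Δ ^ (η / e) * x := by
    rw [← hx, ← mul_assoc, ← Real.rpow_add hΔ]
    simp
  have h2 : w = (w ^ (1 / e)) ^ e := by
    rw [← Real.rpow_mul hw, one_div, inv_mul_cancel₀ (ne_of_gt he), Real.rpow_one]
  rw [h2, h1, Real.mul_rpow (Real.rpow_nonneg hΔ.le _) hxnn, ← Real.rpow_mul hΔ.le,
    div_mul_cancel₀ _ (ne_of_gt he)]
set_option maxHeartbeats 2000000 in
lemma young_riemann (n : ℕ) (f g : ℝ → Fin n → ℝ) (u v : ℝ) (η e₁ e₂ CF CG : ℝ)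
    (hη : 0 ≤ η) (he₁ : 0 < e₁) (he₂ : 0 < e₂) (hσ : 1 < e₁ + e₂)
    (hCF : 0 < CF) (hCG : 0 < CG) (huv : u < v)
    (hf : ∀ P : Pt u v, ∑ j : Fin P.m,
      (P.κ j.succ - P.κ j.castSucc) ^ (-(η / e₁)) *
        ‖f (P.κ j.succ) - f (P.κ j.castSucc)‖ ^ (1 / e₁) ≤ CF)
    (hg : ∀ P : Pt u v, ∑ j : Fin P.m,
      (P.κ j.succ - P.κ j.castSucc) ^ (-(η / e₂)) *
        ‖g (P.κ j.succ) - g (P.κ j.castSucc)‖ ^ (1 / e₂) ≤ CG) :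
    ∀ (m : ℕ) (κ : Fin (m + 1) → ℝ), StrictMono κ → κ 0 = u → κ (Fin.last m) = v →
      ‖riemannSum n (fun τ => f τ - f u) g κ‖ ≤
        (∑ k ∈ Finset.range (m - 1), ((k : ℝ) + 1) ^ (-(e₁ + e₂))) *
          ((v - u) ^ (2 * η) * (CF ^ e₁ * CG ^ e₂)) := by
  intro m
  induction m with
  | zero =>
    intro κ hκ h0 hl
    exact absurd (h0.symm.trans hl) (ne_of_lt huv)
  | succ M ih =>
    intro κ hκ h0 hl
    rcases Nat.eq_zero_or_pos M with hM | hM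
    · subst hM
      have hz : riemannSum n (fun τ => f τ - f u) g κ = 0 := by
        unfold riemannSum
        rw [Fin.sum_univ_one]
        funext p q
        simp [show κ ((0 : Fin 1).castSucc) = u from h0]
        left
        rw [h0]
        ring
      rw [hz, norm_zero]
      simp
    · haveI : Nonempty (Fin M) := ⟨⟨0, hM⟩⟩
      have hσ0 : 0 < e₁ + e₂ := by linarith
      have hvu : 0 < v - u := by linarith
      have hΔpos : ∀ i : Fin (M + 1), 0 < κ i.succ - κ i.castSucc :=
        fun i => sub_pos.2 (hκ ((Fin.castSucc_lt_succ (i := i))))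
      have hΔle : ∀ i : Fin (M + 1), κ i.succ - κ i.castSucc ≤ v - u := fun i =>
        sub_le_sub (by rw [← hl]; exact hκ.monotone (Fin.le_last _))
          (by rw [← h0]; exact hκ.monotone (Fin.zero_le _))
      set Xf := fun i : Fin (M + 1) =>
        (κ i.succ - κ i.castSucc) ^ (-(η / e₁)) *
          ‖f (κ i.succ) - f (κ i.castSucc)‖ ^ (1 / e₁) with hXfdef
      set Yg := fun i : Fin (M + 1) =>
        (κ i.succ - κ i.castSucc) ^ (-(η / e₂)) *
          ‖g (κ i.succ) - g (κ i.castSucc)‖ ^ (1 / e₂) with hYgdef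
      have hXf0 : ∀ i, 0 ≤ Xf i := fun i =>
        mul_nonneg (Real.rpow_nonneg (hΔpos i).le _) (Real.rpow_nonneg (norm_nonneg _) _)
      have hYg0 : ∀ i, 0 ≤ Yg i := fun i =>
        mul_nonneg (Real.rpow_nonneg (hΔpos i).le _) (Real.rpow_nonneg (norm_nonneg _) _)
      have hXfsum : ∑ i, Xf i ≤ CF := hf ⟨M + 1, κ, hκ, h0, hl⟩
      have hYgsum : ∑ i, Yg i ≤ CG := hg ⟨M + 1, κ, hκ, h0, hl⟩
      set lam := e₁ / (e₁ + e₂) with hlamdef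
      set mu := e₂ / (e₁ + e₂) with hmudef
      have hlam1 : lam + mu = 1 := by rw [hlamdef, hmudef]; field_simp
      have hlam0 : 0 ≤ lam := by positivity
      have hmu0 : 0 ≤ mu := by positivity
      set B := CF ^ lam * CG ^ mu with hBdef
      have hB0 : 0 < B := mul_pos (Real.rpow_pos_of_pos hCF _) (Real.rpow_pos_of_pos hCG _)
      set r := fun j : Fin M => Xf j.castSucc ^ lam * Yg j.succ ^ mu with hrdef
      have hrsum : ∑ j, r j ≤ B := by
        have hstep : ∀ j : Fin M,
            r j ≤ B * (lam * (Xf j.castSucc / CF) + mu * (Yg j.succ / CG)) := by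
          intro j
          have hgm := Real.geom_mean_le_arith_mean2_weighted
            (p₁ := Xf j.castSucc / CF) (p₂ := Yg j.succ / CG) hlam0 hmu0
            (div_nonneg (hXf0 j.castSucc) hCF.le) (div_nonneg (hYg0 j.succ) hCG.le) hlam1
          have hre : r j = B * ((Xf j.castSucc / CF) ^ lam * (Yg j.succ / CG) ^ mu) := by
            rw [hrdef, hBdef]
            simp only
            rw [Real.div_rpow (hXf0 _) hCF.le, Real.div_rpow (hYg0 _) hCG.le]
            have h1 : CF ^ lam ≠ 0 := ne_of_gt (Real.rpow_pos_of_pos hCF _)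
            have h2 : CG ^ mu ≠ 0 := ne_of_gt (Real.rpow_pos_of_pos hCG _)
            field_simp
          rw [hre]
          exact mul_le_mul_of_nonneg_left hgm hB0.le
        have hx : ∑ j : Fin M, Xf j.castSucc ≤ CF := by
          refine le_trans ?_ hXfsum
          rw [Fin.sum_univ_castSucc (f := Xf)]
          exact le_add_of_nonneg_right (hXf0 _)
        have hy : ∑ j : Fin M, Yg j.succ ≤ CG := by
          refine le_trans ?_ hYgsum
          rw [Fin.sum_univ_succ (f := Yg)]
          exact le_add_of_nonneg_left (hYg0 _)
        have hsum2 : ∑ j : Fin M, (lam * (Xf j.castSucc / CF) + mu * (Yg j.succ / CG)) ≤ 1 := by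
          rw [Finset.sum_add_distrib]
          have h1 : ∑ j : Fin M, lam * (Xf j.castSucc / CF)
              = lam * ((∑ j : Fin M, Xf j.castSucc) / CF) := by
            rw [Finset.sum_div, Finset.mul_sum]
          have h2 : ∑ j : Fin M, mu * (Yg j.succ / CG)
              = mu * ((∑ j : Fin M, Yg j.succ) / CG) := by
            rw [Finset.sum_div, Finset.mul_sum]
          rw [h1, h2]
          have hd1 : (∑ j : Fin M, Xf j.castSucc) / CF ≤ 1 := by
            rw [div_le_one hCF]; exact hx
          have hd2 : (∑ j : Fin M, Yg j.succ) / CG ≤ 1 := by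
            rw [div_le_one hCG]; exact hy
          have := add_le_add (mul_le_mul_of_nonneg_left hd1 hlam0)
            (mul_le_mul_of_nonneg_left hd2 hmu0)
          linarith
        have h7 : ∑ j : Fin M, r j
            ≤ ∑ j : Fin M, B * (lam * (Xf j.castSucc / CF) + mu * (Yg j.succ / CG)) :=
          Finset.sum_le_sum fun j _ => hstep j
        have h8 : ∑ j : Fin M, B * (lam * (Xf j.castSucc / CF) + mu * (Yg j.succ / CG))
            = B * ∑ j : Fin M, (lam * (Xf j.castSucc / CF) + mu * (Yg j.succ / CG)) := by
          rw [Finset.mul_sum]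
        have h9 := mul_le_mul_of_nonneg_left hsum2 hB0.le
        rw [mul_one] at h9
        exact h7.trans ((le_of_eq h8).trans h9)
      obtain ⟨j₀, -, hj₀⟩ := Finset.exists_min_image Finset.univ r
        ⟨Classical.arbitrary _, Finset.mem_univ _⟩
      have hr0 : 0 ≤ r j₀ := mul_nonneg (Real.rpow_nonneg (hXf0 _) _)
        (Real.rpow_nonneg (hYg0 _) _)
      have hMpos : (0 : ℝ) < (M : ℝ) := by exact_mod_cast hM
      have hmin : r j₀ ≤ B / (M : ℝ) := by
        rw [le_div_iff₀ hMpos, mul_comm]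
        have hcard := Finset.card_nsmul_le_sum Finset.univ r (r j₀)
          fun x _ => hj₀ x (Finset.mem_univ x)
        rw [Finset.card_univ, Fintype.card_fin, nsmul_eq_mul] at hcard
        exact hcard.trans hrsum
      -- removal point
      set p : Fin (M + 2) := j₀.succ.castSucc with hpdef
      have hvp : (p : ℕ) = (j₀ : ℕ) + 1 := rfl
      have hj₀M : (j₀ : ℕ) < M := j₀.isLt
      set κ' : Fin (M + 1) → ℝ := κ ∘ p.succAbove with hκ'def
      have hκ'm : StrictMono κ' := hκ.comp (Fin.strictMono_succAbove p)
      have h0' : κ' 0 = u := by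
        show κ (p.succAbove 0) = u
        rw [Fin.succAbove_of_castSucc_lt p 0 (by rw [Fin.lt_def]; simp [hvp])]
        rw [show (0 : Fin (M + 1)).castSucc = 0 from rfl, h0]
      have hl' : κ' (Fin.last M) = v := by
        show κ (p.succAbove (Fin.last M)) = v
        rw [Fin.succAbove_of_le_castSucc p _ (by rw [Fin.le_def]; simp [hvp])]
        rw [Fin.succ_last, hl]
      set F := fun τ : ℝ => f τ - f u with hFdef
      set A := fun i : Fin (M + 1) =>
        (fun pp qq => F (κ i.castSucc) pp * (g (κ i.succ) qq - g (κ i.castSucc) qq)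
          : Fin n → Fin n → ℝ) with hAdef
      set A' := fun i : Fin M =>
        (fun pp qq => F (κ' i.castSucc) pp * (g (κ' i.succ) qq - g (κ' i.castSucc) qq)
          : Fin n → Fin n → ℝ) with hA'def
      have hSA : riemannSum n F g κ = ∑ i : Fin (M + 1), A i := rfl
      have hSA' : riemannSum n F g κ' = ∑ i : Fin M, A' i := rfl
      set iR : Fin (M + 1) := j₀.succ with hiRdef
      set D : Fin n → Fin n → ℝ := fun pp qq =>
        (f (κ p) pp - f (κ j₀.castSucc.castSucc) pp) *
          (g (κ j₀.succ.succ) qq - g (κ p) qq) with hDdef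
      have hsA : iR.succAbove j₀ = j₀.castSucc :=
        Fin.succAbove_of_castSucc_lt _ _ ((Fin.castSucc_lt_succ (i := j₀)))
      have hAiR : A iR = fun pp qq => F (κ p) pp * (g (κ j₀.succ.succ) qq - g (κ p) qq) := rfl
      have hAj₀ : A (iR.succAbove j₀)
          = fun pp qq => F (κ j₀.castSucc.castSucc) pp *
              (g (κ p) qq - g (κ j₀.castSucc.castSucc) qq) := by
        rw [hsA]
        rfl
      have hcs1 : κ' j₀.castSucc = κ j₀.castSucc.castSucc := by
        show κ (p.succAbove j₀.castSucc) = _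
        rw [Fin.succAbove_of_castSucc_lt p _ (by rw [Fin.lt_def]; simp [hvp])]
      have hcs2 : κ' j₀.succ = κ j₀.succ.succ := by
        show κ (p.succAbove j₀.succ) = _
        rw [Fin.succAbove_of_le_castSucc p _ le_rfl]
      have hA'j₀ : A' j₀ = fun pp qq => F (κ j₀.castSucc.castSucc) pp *
          (g (κ j₀.succ.succ) qq - g (κ j₀.castSucc.castSucc) qq) := by
        rw [hA'def]
        simp only
        rw [hcs1, hcs2]
      have hAi : ∀ i : Fin M, i ≠ j₀ → A' i = A (iR.succAbove i) := by
        intro i hi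
        rcases lt_or_gt_of_ne hi with hlt | hgt
        · have hij : (i : ℕ) < (j₀ : ℕ) := hlt
          have s1 : iR.succAbove i = i.castSucc :=
            Fin.succAbove_of_castSucc_lt _ _ (by rw [Fin.lt_def]; simp [hiRdef]; omega)
          have c1 : κ' i.castSucc = κ i.castSucc.castSucc := by
            show κ (p.succAbove i.castSucc) = _
            rw [Fin.succAbove_of_castSucc_lt p _ (by rw [Fin.lt_def]; simp [hvp]; omega)]
          have c2 : κ' i.succ = κ i.succ.castSucc := by
            show κ (p.succAbove i.succ) = _
            rw [Fin.succAbove_of_castSucc_lt p _ (by rw [Fin.lt_def]; simp [hvp]; omega)]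
          rw [hA'def, hAdef, s1]
          simp only
          rw [c1, c2]
          have : i.castSucc.succ = i.succ.castSucc := Fin.succ_castSucc i
          rw [this]
        · have hij : (j₀ : ℕ) < (i : ℕ) := hgt
          have s1 : iR.succAbove i = i.succ :=
            Fin.succAbove_of_le_castSucc _ _ (by rw [Fin.le_def]; simp [hiRdef]; omega)
          have c1 : κ' i.castSucc = κ i.succ.castSucc := by
            show κ (p.succAbove i.castSucc) = _
            rw [Fin.succAbove_of_le_castSucc p _ (by rw [Fin.le_def]; simp [hvp]; omega)]
            rw [Fin.succ_castSucc]
          have c2 : κ' i.succ = κ i.succ.succ := by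
            show κ (p.succAbove i.succ) = _
            rw [Fin.succAbove_of_le_castSucc p _ (by rw [Fin.le_def]; simp [hvp]; omega)]
          rw [hA'def, hAdef, s1]
          simp only
          rw [c1, c2]
      have hdiff : ∑ i : Fin M, (A' i - A (iR.succAbove i))
          = A' j₀ - A (iR.succAbove j₀) := by
        refine Finset.sum_eq_single j₀ (fun b _ hb => by rw [hAi b hb, sub_self])
          (fun h => absurd (Finset.mem_univ j₀) h)
      have hrem : riemannSum n F g κ = riemannSum n F g κ' + D := by
        rw [hSA, hSA', Fin.sum_univ_succAbove A iR]
        have hs' : ∑ i : Fin M, A (iR.succAbove i)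
            = (∑ i : Fin M, A' i) - (A' j₀ - A (iR.succAbove j₀)) := by
          rw [← hdiff, Finset.sum_sub_distrib]
          abel
        rw [hs']
        have hkey : A iR - (A' j₀ - A (iR.succAbove j₀)) = D := by
          rw [hAiR, hA'j₀, hAj₀, hDdef]
          funext pp qq
          simp only [Pi.sub_apply, hFdef]
          ring
        calc A iR + ((∑ i : Fin M, A' i) - (A' j₀ - A (iR.succAbove j₀)))
            = (∑ i : Fin M, A' i) + (A iR - (A' j₀ - A (iR.succAbove j₀))) := by abel
          _ = (∑ i : Fin M, A' i) + D := by rw [hkey]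
      -- norm bound on D
      have hfi : ‖f (κ p) - f (κ j₀.castSucc.castSucc)‖
          ≤ (κ j₀.castSucc.succ - κ j₀.castSucc.castSucc) ^ η * Xf j₀.castSucc ^ e₁ := by
        have hx0 : (κ j₀.castSucc.succ - κ j₀.castSucc.castSucc) ^ (-(η / e₁)) *
            ‖f (κ j₀.castSucc.succ) - f (κ j₀.castSucc.castSucc)‖ ^ (1 / e₁)
            = Xf j₀.castSucc := rfl
        exact incr_from_x (hΔpos j₀.castSucc) he₁ (norm_nonneg _) hx0
      have hgi : ‖g (κ j₀.succ.succ) - g (κ p)‖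
          ≤ (κ j₀.succ.succ - κ j₀.succ.castSucc) ^ η * Yg j₀.succ ^ e₂ := by
        have hx0 : (κ j₀.succ.succ - κ j₀.succ.castSucc) ^ (-(η / e₂)) *
            ‖g (κ j₀.succ.succ) - g (κ j₀.succ.castSucc)‖ ^ (1 / e₂)
            = Yg j₀.succ := rfl
        exact incr_from_x (hΔpos j₀.succ) he₂ (norm_nonneg _) hx0
      have hXe0 : 0 ≤ Xf j₀.castSucc ^ e₁ := Real.rpow_nonneg (hXf0 _) _
      have hYe0 : 0 ≤ Yg j₀.succ ^ e₂ := Real.rpow_nonneg (hYg0 _) _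
      have hΔη1 : (κ j₀.castSucc.succ - κ j₀.castSucc.castSucc) ^ η ≤ (v - u) ^ η :=
        Real.rpow_le_rpow (hΔpos j₀.castSucc).le (hΔle j₀.castSucc) hη
      have hΔη2 : (κ j₀.succ.succ - κ j₀.succ.castSucc) ^ η ≤ (v - u) ^ η :=
        Real.rpow_le_rpow (hΔpos j₀.succ).le (hΔle j₀.succ) hη
      have hDle : ‖D‖ ≤ (v - u) ^ (2 * η) * (CF ^ e₁ * CG ^ e₂) / (M : ℝ) ^ (e₁ + e₂) := by
        have h1 : ‖D‖ ≤ ‖f (κ p) - f (κ j₀.castSucc.castSucc)‖ *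
            ‖g (κ j₀.succ.succ) - g (κ p)‖ :=
          outer_norm_le (f (κ p) - f (κ j₀.castSucc.castSucc))
            (g (κ j₀.succ.succ) - g (κ p))
        have h2 : ‖f (κ p) - f (κ j₀.castSucc.castSucc)‖ *
            ‖g (κ j₀.succ.succ) - g (κ p)‖
            ≤ ((v - u) ^ η * Xf j₀.castSucc ^ e₁) * ((v - u) ^ η * Yg j₀.succ ^ e₂) := by
          apply mul_le_mul
          · exact hfi.trans (mul_le_mul_of_nonneg_right hΔη1 hXe0)
          · exact hgi.trans (mul_le_mul_of_nonneg_right hΔη2 hYe0)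
          · exact norm_nonneg _
          · exact mul_nonneg (Real.rpow_nonneg hvu.le _) hXe0
        have h3 : ((v - u) ^ η * Xf j₀.castSucc ^ e₁) * ((v - u) ^ η * Yg j₀.succ ^ e₂)
            = (v - u) ^ (2 * η) * (Xf j₀.castSucc ^ e₁ * Yg j₀.succ ^ e₂) := by
          rw [show (2 : ℝ) * η = η + η by ring, Real.rpow_add hvu]
          ring
        have h4 : Xf j₀.castSucc ^ e₁ * Yg j₀.succ ^ e₂ = r j₀ ^ (e₁ + e₂) := by
          rw [hrdef]
          simp only
          rw [Real.mul_rpow (Real.rpow_nonneg (hXf0 _) _) (Real.rpow_nonneg (hYg0 _) _),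
            ← Real.rpow_mul (hXf0 _), ← Real.rpow_mul (hYg0 _), hlamdef, hmudef,
            div_mul_cancel₀ _ (ne_of_gt hσ0), div_mul_cancel₀ _ (ne_of_gt hσ0)]
        have h5 : r j₀ ^ (e₁ + e₂) ≤ (B / (M : ℝ)) ^ (e₁ + e₂) :=
          Real.rpow_le_rpow hr0 hmin hσ0.le
        have h6 : (B / (M : ℝ)) ^ (e₁ + e₂) = (CF ^ e₁ * CG ^ e₂) / (M : ℝ) ^ (e₁ + e₂) := by
          rw [Real.div_rpow hB0.le hMpos.le, hBdef,
            Real.mul_rpow (Real.rpow_nonneg hCF.le _) (Real.rpow_nonneg hCG.le _),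
            ← Real.rpow_mul hCF.le, ← Real.rpow_mul hCG.le, hlamdef, hmudef,
            div_mul_cancel₀ _ (ne_of_gt hσ0), div_mul_cancel₀ _ (ne_of_gt hσ0)]
        calc ‖D‖ ≤ _ := h1
          _ ≤ _ := h2
          _ = (v - u) ^ (2 * η) * (Xf j₀.castSucc ^ e₁ * Yg j₀.succ ^ e₂) := h3
          _ = (v - u) ^ (2 * η) * (r j₀ ^ (e₁ + e₂)) := by rw [h4]
          _ ≤ (v - u) ^ (2 * η) * ((CF ^ e₁ * CG ^ e₂) / (M : ℝ) ^ (e₁ + e₂)) := by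
              rw [← h6]
              exact mul_le_mul_of_nonneg_left h5 (Real.rpow_nonneg hvu.le _)
          _ = (v - u) ^ (2 * η) * (CF ^ e₁ * CG ^ e₂) / (M : ℝ) ^ (e₁ + e₂) := by ring
      have hih := ih κ' hκ'm h0' hl'
      have hRnn : 0 ≤ (v - u) ^ (2 * η) * (CF ^ e₁ * CG ^ e₂) :=
        mul_nonneg (Real.rpow_nonneg hvu.le _)
          (mul_nonneg (Real.rpow_nonneg hCF.le _) (Real.rpow_nonneg hCG.le _))
      have hMsplit : ∑ k ∈ Finset.range M, ((k : ℝ) + 1) ^ (-(e₁ + e₂))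
          = (∑ k ∈ Finset.range (M - 1), ((k : ℝ) + 1) ^ (-(e₁ + e₂)))
            + ((M : ℝ)) ^ (-(e₁ + e₂)) := by
        conv_lhs => rw [show M = (M - 1) + 1 by omega]
        rw [Finset.sum_range_succ]
        congr 2
        have : ((M - 1 : ℕ) : ℝ) = (M : ℝ) - 1 := by
          rw [Nat.cast_sub (by omega)]
          norm_num
        rw [this]
        ring
      calc ‖riemannSum n F g κ‖ = ‖riemannSum n F g κ' + D‖ := by rw [hrem]
        _ ≤ ‖riemannSum n F g κ'‖ + ‖D‖ := norm_add_le _ _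
        _ ≤ (∑ k ∈ Finset.range (M - 1), ((k : ℝ) + 1) ^ (-(e₁ + e₂))) *
              ((v - u) ^ (2 * η) * (CF ^ e₁ * CG ^ e₂))
            + (v - u) ^ (2 * η) * (CF ^ e₁ * CG ^ e₂) / (M : ℝ) ^ (e₁ + e₂) :=
            add_le_add hih hDle
        _ = (∑ k ∈ Finset.range M, ((k : ℝ) + 1) ^ (-(e₁ + e₂))) *
              ((v - u) ^ (2 * η) * (CF ^ e₁ * CG ^ e₂)) := by
            rw [hMsplit, add_mul]
            congr 1
            rw [Real.rpow_neg hMpos.le]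
            field_simp
        _ = (∑ k ∈ Finset.range (M + 1 - 1), ((k : ℝ) + 1) ^ (-(e₁ + e₂))) *
              ((v - u) ^ (2 * η) * (CF ^ e₁ * CG ^ e₂)) := by norm_num
lemma realPartSum {s t : ℝ} (hW : ctrlW β η₁ n Y YY s t ≠ ⊤) (P : Pt s t) :
    ∑ j : Fin P.m, pw β η₁ n Y YY (P.κ j.castSucc) (P.κ j.succ)
      ≤ (ctrlW β η₁ n Y YY s t).toReal := by
  rw [← ENNReal.ofReal_le_iff_le_toReal hW, ENNReal.ofReal_sum_of_nonneg
    (fun j _ => pw_nonneg (le_of_lt (P.mono ((Fin.castSucc_lt_succ (i := j))))))]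
  exact partSum_le P

noncomputable def Pt.single {u v : ℝ} (huv : u < v) : Pt u v :=
  ⟨1, ![u, v], by
    rw [Fin.strictMono_iff_lt_succ]
    intro i
    fin_cases i
    simpa using huv, rfl, rfl⟩

lemma pw_le_toReal {u v : ℝ} (huv : u < v) (hW : ctrlW β η₁ n Y YY u v ≠ ⊤) :
    pw β η₁ n Y YY u v ≤ (ctrlW β η₁ n Y YY u v).toReal := by
  have h := realPartSum hW (Pt.single huv)
  change ∑ j : Fin 1, pw β η₁ n Y YY (![u, v] j.castSucc) (![u, v] j.succ) ≤ _ at h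
  simpa [Pt.single, Fin.sum_univ_one] using h

lemma const_of_zero {u v : ℝ} (hβ : 0 < β - η₁) (hW : ctrlW β η₁ n Y YY u v = 0) :
    ∀ τ, u ≤ τ → τ ≤ v → Y τ = Y u := by
  intro τ h1 h2
  rcases eq_or_lt_of_le h1 with h1' | h1'
  · rw [← h1']
  · have hle : ctrlW β η₁ n Y YY u τ ≤ ctrlW β η₁ n Y YY u v :=
      ctrlW_mono le_rfl h1'.le h2
    have h0 : ctrlW β η₁ n Y YY u τ = 0 := le_antisymm (hW ▸ hle) zero_le
    have hp := pw_le_toReal h1' (by rw [h0]; exact ENNReal.zero_ne_top)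
    rw [h0, ENNReal.toReal_zero] at hp
    unfold pw at hp
    have hpos : 0 < (τ - u) ^ (-η₁ / (β - η₁)) := Real.rpow_pos_of_pos (by linarith) _
    have hN1 : 0 ≤ ‖Y τ - Y u‖ ^ (1 / (β - η₁)) := Real.rpow_nonneg (norm_nonneg _) _
    have hN2 : 0 ≤ ‖YY u τ‖ ^ (1 / (2 * (β - η₁))) := Real.rpow_nonneg (norm_nonneg _) _
    have hz : ‖Y τ - Y u‖ ^ (1 / (β - η₁)) = 0 := by nlinarith
    have := (Real.rpow_eq_zero (norm_nonneg _)
      (by positivity : (1 : ℝ) / (β - η₁) ≠ 0)).1 hz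
    rw [← sub_eq_zero]
    exact norm_eq_zero.1 this

lemma hasYoung_norm_le {n : ℕ} {f g : ℝ → Fin n → ℝ} {u v : ℝ}
    {I : Fin n → Fin n → ℝ} {C : ℝ}
    (hI : HasYoungIntegral n f g u v I) (huv : u < v)
    (hS : ∀ (m : ℕ) (κ : Fin (m + 1) → ℝ), StrictMono κ → κ 0 = u →
      κ (Fin.last m) = v → ‖riemannSum n f g κ‖ ≤ C) : ‖I‖ ≤ C := by
  refine le_of_forall_pos_le_add fun ε hε => ?_
  obtain ⟨δ, hδ, hconv⟩ := hI ε hε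
  obtain ⟨m, hm⟩ := exists_nat_gt ((v - u) / δ)
  have hmR : (0:ℝ) < (m:ℝ) := (div_pos (by linarith) hδ).trans hm
  set κ : Fin (m + 1) → ℝ := fun j => u + (j : ℕ) * ((v - u) / m) with hκdef
  have hmesh : ∀ j : Fin m, κ j.succ - κ j.castSucc = (v - u) / m := by
    intro j
    rw [hκdef]
    simp only
    rw [show ((j.succ : Fin (m + 1)) : ℕ) = (j : ℕ) + 1 from rfl,
      show ((j.castSucc : Fin (m + 1)) : ℕ) = (j : ℕ) from rfl]
    push_cast
    ring
  have hκm : StrictMono κ := by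
    intro a b hab
    rw [hκdef]
    simp only
    have hab' : ((a : ℕ) : ℝ) < ((b : ℕ) : ℝ) := by exact_mod_cast hab
    have hpos : 0 < (v - u) / m := div_pos (by linarith) hmR
    have := mul_lt_mul_of_pos_right hab' hpos
    linarith
  have hκ0 : κ 0 = u := by rw [hκdef]; simp
  have hκl : κ (Fin.last m) = v := by
    rw [hκdef]
    simp only [Fin.val_last]
    field_simp
    ring
  have hd : ∀ j : Fin m, κ j.succ - κ j.castSucc < δ := by
    intro j
    rw [hmesh j, div_lt_iff₀ hmR]
    have := (div_lt_iff₀ hδ).1 hm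
    nlinarith
  have hcv := hconv m κ hκm hκ0 hκl hd
  calc ‖I‖ = ‖riemannSum n f g κ - (riemannSum n f g κ - I)‖ := by rw [sub_sub_cancel]
    _ ≤ ‖riemannSum n f g κ‖ + ‖riemannSum n f g κ - I‖ := norm_sub_le _ _
    _ ≤ C + ε := add_le_add (hS m κ hκm hκ0 hκl) hcv.le

lemma hasYoung_zero {n : ℕ} {f g : ℝ → Fin n → ℝ} {u v : ℝ}
    {I : Fin n → Fin n → ℝ}
    (hI : HasYoungIntegral n f g u v I) (huv : u < v)
    (hS : ∀ (m : ℕ) (κ : Fin (m + 1) → ℝ), StrictMono κ → κ 0 = u →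
      κ (Fin.last m) = v → riemannSum n f g κ = 0) : I = 0 := by
  have h := hasYoung_norm_le (C := 0) hI huv
    (fun m κ h1 h2 h3 => by rw [hS m κ h1 h2 h3, norm_zero])
  exact norm_le_zero_iff.1 h

/-- The combined bound on a cross Young integral. -/
lemma cross_integral_bound (n : ℕ) (f g : ℝ → Fin n → ℝ) (u v : ℝ) (η e₁ e₂ CF CG : ℝ)
    (hη : 0 ≤ η) (he₁ : 0 < e₁) (he₂ : 0 < e₂) (hσ : 1 < e₁ + e₂) (huv : u < v)
    (hCF0 : 0 ≤ CF) (hCG0 : 0 ≤ CG)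
    (hf : ∀ P : Pt u v, ∑ j : Fin P.m,
      (P.κ j.succ - P.κ j.castSucc) ^ (-(η / e₁)) *
        ‖f (P.κ j.succ) - f (P.κ j.castSucc)‖ ^ (1 / e₁) ≤ CF)
    (hg : ∀ P : Pt u v, ∑ j : Fin P.m,
      (P.κ j.succ - P.κ j.castSucc) ^ (-(η / e₂)) *
        ‖g (P.κ j.succ) - g (P.κ j.castSucc)‖ ^ (1 / e₂) ≤ CG)
    (I : Fin n → Fin n → ℝ)
    (hI : HasYoungIntegral n (fun τ => f τ - f u) g u v I) :
    ‖I‖ ≤ Kc (e₁ + e₂) * ((v - u) ^ (2 * η) * (CF ^ e₁ * CG ^ e₂)) := by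
  have hKc0 : 0 ≤ Kc (e₁ + e₂) := le_trans zero_le_one (one_le_Kc hσ)
  have hR0 : 0 ≤ (v - u) ^ (2 * η) * (CF ^ e₁ * CG ^ e₂) :=
    mul_nonneg (Real.rpow_nonneg (by linarith) _)
      (mul_nonneg (Real.rpow_nonneg hCF0 _) (Real.rpow_nonneg hCG0 _))
  rcases eq_or_lt_of_le hCF0 with hCF | hCF
  · -- CF = 0 : f is constant along every partition, all Riemann sums vanish
    have hz : I = 0 := by
      refine hasYoung_zero hI huv ?_
      intro m κ h1 h2 h3
      have hsum := hf ⟨m, κ, h1, h2, h3⟩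
      rw [← hCF] at hsum
      have hterm : ∀ j : Fin m,
          (κ j.succ - κ j.castSucc) ^ (-(η / e₁)) *
            ‖f (κ j.succ) - f (κ j.castSucc)‖ ^ (1 / e₁) = 0 := by
        have := (Finset.sum_eq_zero_iff_of_nonneg (fun j _ =>
          mul_nonneg (Real.rpow_nonneg (sub_pos.2 (h1 ((Fin.castSucc_lt_succ (i := j))))).le _)
            (Real.rpow_nonneg (norm_nonneg _) _))).1
          (le_antisymm hsum (Finset.sum_nonneg (fun j _ =>
            mul_nonneg (Real.rpow_nonneg (sub_pos.2 (h1 ((Fin.castSucc_lt_succ (i := j))))).le _)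
              (Real.rpow_nonneg (norm_nonneg _) _))))
        exact fun j => this j (Finset.mem_univ j)
      have hfc : ∀ j : Fin m, f (κ j.succ) = f (κ j.castSucc) := by
        intro j
        have hpos : 0 < (κ j.succ - κ j.castSucc) ^ (-(η / e₁)) :=
          Real.rpow_pos_of_pos (sub_pos.2 (h1 ((Fin.castSucc_lt_succ (i := j))))) _
        have h4 := hterm j
        have h5 : ‖f (κ j.succ) - f (κ j.castSucc)‖ ^ (1 / e₁) = 0 := by
          rcases mul_eq_zero.1 h4 with h | h
          · exact absurd h (ne_of_gt hpos)
          · exact h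
        have := (Real.rpow_eq_zero (norm_nonneg _)
          (by positivity : (1 : ℝ) / e₁ ≠ 0)).1 h5
        rw [← sub_eq_zero]
        exact norm_eq_zero.1 this
      have hfu : ∀ i : Fin (m + 1), f (κ i) = f u := by
        intro i
        induction i using Fin.induction with
        | zero => rw [h2]
        | succ i ihi => rw [hfc i, ihi]
      unfold riemannSum
      apply Finset.sum_eq_zero
      intro j _
      funext pp qq
      simp [hfu j.castSucc]
    rw [hz, norm_zero]
    exact mul_nonneg hKc0 hR0
  · rcases eq_or_lt_of_le hCG0 with hCG | hCG
    · -- CG = 0 : g constant along every partition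
      have hz : I = 0 := by
        refine hasYoung_zero hI huv ?_
        intro m κ h1 h2 h3
        have hsum := hg ⟨m, κ, h1, h2, h3⟩
        rw [← hCG] at hsum
        have hterm := (Finset.sum_eq_zero_iff_of_nonneg (fun j _ =>
          mul_nonneg (Real.rpow_nonneg (sub_pos.2 (h1 ((Fin.castSucc_lt_succ (i := j))))).le _)
            (Real.rpow_nonneg (norm_nonneg _) _))).1
          (le_antisymm hsum (Finset.sum_nonneg (fun j _ =>
            mul_nonneg (Real.rpow_nonneg (sub_pos.2 (h1 ((Fin.castSucc_lt_succ (i := j))))).le _)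
              (Real.rpow_nonneg (norm_nonneg _) _))))
        have hgc : ∀ j : Fin m, g (κ j.succ) = g (κ j.castSucc) := by
          intro j
          have hpos : 0 < (κ j.succ - κ j.castSucc) ^ (-(η / e₂)) :=
            Real.rpow_pos_of_pos (sub_pos.2 (h1 ((Fin.castSucc_lt_succ (i := j))))) _
          have h4 := hterm j (Finset.mem_univ j)
          have h5 : ‖g (κ j.succ) - g (κ j.castSucc)‖ ^ (1 / e₂) = 0 := by
            rcases mul_eq_zero.1 h4 with h | h
            · exact absurd h (ne_of_gt hpos)
            · exact h
          have := (Real.rpow_eq_zero (norm_nonneg _)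
            (by positivity : (1 : ℝ) / e₂ ≠ 0)).1 h5
          rw [← sub_eq_zero]
          exact norm_eq_zero.1 this
        unfold riemannSum
        apply Finset.sum_eq_zero
        intro j _
        funext pp qq
        simp [hgc j]
      rw [hz, norm_zero]
      exact mul_nonneg hKc0 hR0
    · refine hasYoung_norm_le hI huv ?_
      intro m κ h1 h2 h3
      have hy := young_riemann n f g u v η e₁ e₂ CF CG hη he₁ he₂ hσ hCF hCG huv
        (fun P => hf P) (fun P => hg P) m κ h1 h2 h3
      refine hy.trans ?_
      exact mul_le_mul_of_nonneg_right (Kc_partial_le hσ _) hR0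

lemma two_rpow_le {x y ρ : ℝ} (hx : 0 ≤ x) (hy : 0 ≤ y) (hρ : 0 ≤ ρ) :
    (x + y) ^ ρ ≤ 2 ^ ρ * (x ^ ρ + y ^ ρ) := by
  have h1 : x + y ≤ 2 * max x y := by
    rcases le_total x y with h | h
    · rw [max_eq_right h]; linarith
    · rw [max_eq_left h]; linarith
  have hmax0 : 0 ≤ max x y := le_trans hx (le_max_left _ _)
  have h2 : (max x y) ^ ρ ≤ x ^ ρ + y ^ ρ := by
    rcases max_cases x y with ⟨h, -⟩ | ⟨h, -⟩ <;> rw [h]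
    · exact le_add_of_nonneg_right (Real.rpow_nonneg hy _)
    · exact le_add_of_nonneg_left (Real.rpow_nonneg hx _)
  calc (x + y) ^ ρ ≤ (2 * max x y) ^ ρ :=
        Real.rpow_le_rpow (by linarith) h1 hρ
    _ = 2 ^ ρ * (max x y) ^ ρ := Real.mul_rpow (by norm_num) hmax0
    _ ≤ 2 ^ ρ * (x ^ ρ + y ^ ρ) :=
        mul_le_mul_of_nonneg_left h2 (Real.rpow_nonneg (by norm_num) _)

lemma two_rpow_superadd {x y p : ℝ} (hx : 0 ≤ x) (hy : 0 ≤ y) (hp : 1 ≤ p) :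
    x ^ p + y ^ p ≤ (x + y) ^ p := by
  rcases eq_or_lt_of_le (add_nonneg hx hy) with h0 | h0
  · have hx0 : x = 0 := by linarith
    have hy0 : y = 0 := by linarith
    simp [hx0, hy0, Real.zero_rpow (by linarith : p ≠ 0)]
  · have key : ∀ z : ℝ, 0 ≤ z → z ≤ x + y → z ^ p ≤ z * (x + y) ^ (p - 1) := by
      intro z hz hzle
      rcases eq_or_lt_of_le hz with hz0 | hz0
      · rw [← hz0, Real.zero_rpow (by linarith : p ≠ 0), zero_mul]
      · have : z ^ p = z * z ^ (p - 1) := by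
          rw [show p = 1 + (p - 1) by ring, Real.rpow_add hz0, Real.rpow_one]
          ring_nf
        rw [this]
        exact mul_le_mul_of_nonneg_left
          (Real.rpow_le_rpow hz0.le hzle (by linarith)) hz0.le
    have h3 : x * (x + y) ^ (p - 1) + y * (x + y) ^ (p - 1) = (x + y) ^ p := by
      rw [← add_mul, show p = 1 + (p - 1) by ring, Real.rpow_add h0, Real.rpow_one]
      ring_nf
    have hxk := key x hx (by linarith)
    have hyk := key y hy (by linarith)
    linarith

lemma sum_rpow_le {ι : Type*} (s : Finset ι) (f : ι → ℝ) (θ : ℝ) (hθ : 1 ≤ θ)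
    (hf : ∀ i ∈ s, 0 ≤ f i) : ∑ i ∈ s, f i ^ θ ≤ (∑ i ∈ s, f i) ^ θ := by
  induction s using Finset.cons_induction with
  | empty => simp [Real.zero_rpow (by linarith : θ ≠ 0)]
  | cons a s ha ih =>
    rw [Finset.sum_cons, Finset.sum_cons]
    have hf' : ∀ i ∈ s, 0 ≤ f i := fun i hi => hf i (Finset.mem_cons_of_mem hi)
    calc f a ^ θ + ∑ i ∈ s, f i ^ θ ≤ f a ^ θ + (∑ i ∈ s, f i) ^ θ := by
          linarith [ih hf']
      _ ≤ (f a + ∑ i ∈ s, f i) ^ θ :=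
          two_rpow_superadd (hf a (Finset.mem_cons_self a s)) (Finset.sum_nonneg hf') hθ
lemma first_level_sum_le {u v : ℝ} (hW : ctrlW β η₁ n Y YY u v ≠ ⊤) (P : Pt u v) :
    ∑ j : Fin P.m, (P.κ j.succ - P.κ j.castSucc) ^ (-(η₁ / (β - η₁))) *
        ‖Y (P.κ j.succ) - Y (P.κ j.castSucc)‖ ^ (1 / (β - η₁))
      ≤ (ctrlW β η₁ n Y YY u v).toReal := by
  refine le_trans (Finset.sum_le_sum fun j _ => ?_) (realPartSum hW P)
  unfold pw
  rw [neg_div]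
  exact mul_le_mul_of_nonneg_left
    (le_add_of_nonneg_right (Real.rpow_nonneg (norm_nonneg _) _))
    (Real.rpow_nonneg (sub_nonneg.2 (le_of_lt (P.mono ((Fin.castSucc_lt_succ (i := j)))))) _)

lemma pow_theta_piece {a w E1 E2 η c x1 x2 : ℝ} (ha : 0 < a) (hw : 0 ≤ w) (hc : 0 ≤ c)
    (hE1 : 0 < E1) (hE2 : 0 < E2) (hx : x2 * (E2 / E1) = x1)
    (hle : a ^ (-η / E2) * w ^ x2 ≤ c) :
    a ^ (-η / E1) * w ^ x1 ≤ c ^ (E2 / E1) := by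
  have hexp : (-η / E2) * (E2 / E1) = -η / E1 := by
    field_simp
    try ring
  have hkey : a ^ (-η / E1) * w ^ x1 = (a ^ (-η / E2) * w ^ x2) ^ (E2 / E1) := by
    rw [Real.mul_rpow (Real.rpow_nonneg ha.le _) (Real.rpow_nonneg hw _),
      ← Real.rpow_mul ha.le, ← Real.rpow_mul hw, hx, hexp]
  rw [hkey]
  exact Real.rpow_le_rpow
    (mul_nonneg (Real.rpow_nonneg ha.le _) (Real.rpow_nonneg hw _)) hle (by positivity)

lemma cross_piece {vu K cX ch E1 E2 η w : ℝ} (hvu : 0 < vu) (hE1 : 0 < E1) (hE2 : 0 < E2)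
    (hη : 0 ≤ η) (hK : 0 ≤ K) (hcX : 0 ≤ cX) (hch : 0 ≤ ch) (hw : 0 ≤ w)
    (hcr : w ≤ K * (vu ^ (2 * η) * (cX ^ E1 * ch ^ E2))) :
    vu ^ (-η / E1) * w ^ (1 / (2 * E1)) ≤
      K ^ (1 / (2 * E1)) * cX / 2 + K ^ (1 / (2 * E1)) * ch ^ (E2 / E1) / 2 := by
  have hp0 : (0:ℝ) < 1 / (2 * E1) := by positivity
  have hQ0 : 0 ≤ cX ^ E1 * ch ^ E2 :=
    mul_nonneg (Real.rpow_nonneg hcX _) (Real.rpow_nonneg hch _)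
  have h1 : w ^ (1 / (2 * E1)) ≤
      (K * (vu ^ (2 * η) * (cX ^ E1 * ch ^ E2))) ^ (1 / (2 * E1)) :=
    Real.rpow_le_rpow hw hcr hp0.le
  have h2 : (K * (vu ^ (2 * η) * (cX ^ E1 * ch ^ E2))) ^ (1 / (2 * E1))
      = K ^ (1 / (2 * E1)) * (vu ^ (η / E1) * (cX ^ (1/2 : ℝ) * ch ^ (E2 / (2 * E1)))) := by
    rw [Real.mul_rpow hK (mul_nonneg (Real.rpow_nonneg hvu.le _) hQ0),
      Real.mul_rpow (Real.rpow_nonneg hvu.le _) hQ0,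
      Real.mul_rpow (Real.rpow_nonneg hcX _) (Real.rpow_nonneg hch _),
      ← Real.rpow_mul hvu.le, ← Real.rpow_mul hcX, ← Real.rpow_mul hch]
    have q1 : 2 * η * (1 / (2 * E1)) = η / E1 := by field_simp; try ring
    have q2 : E1 * (1 / (2 * E1)) = (1/2 : ℝ) := by field_simp; try ring
    have q3 : E2 * (1 / (2 * E1)) = E2 / (2 * E1) := by ring
    rw [q1, q2, q3]
  have h3 : vu ^ (-η / E1) * vu ^ (η / E1) = 1 := by
    rw [← Real.rpow_add hvu, show -η / E1 + η / E1 = 0 by ring, Real.rpow_zero]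
  have h4 : ch ^ (E2 / (2 * E1)) = (ch ^ (E2 / E1)) ^ (1/2 : ℝ) := by
    rw [← Real.rpow_mul hch]
    congr 1
    rw [div_mul_div_comm, mul_one, mul_comm E1 2]
  have h5 : cX ^ (1/2 : ℝ) * (ch ^ (E2 / E1)) ^ (1/2 : ℝ)
      ≤ (1/2 : ℝ) * cX + (1/2 : ℝ) * ch ^ (E2 / E1) :=
    Real.geom_mean_le_arith_mean2_weighted (by norm_num) (by norm_num) hcX
      (Real.rpow_nonneg hch _) (by norm_num)
  have hA0 : 0 < vu ^ (-η / E1) := Real.rpow_pos_of_pos hvu _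
  calc vu ^ (-η / E1) * w ^ (1 / (2 * E1))
      ≤ vu ^ (-η / E1) *
        (K ^ (1 / (2 * E1)) * (vu ^ (η / E1) * (cX ^ (1/2 : ℝ) * ch ^ (E2 / (2 * E1))))) := by
        rw [← h2]
        exact mul_le_mul_of_nonneg_left h1 hA0.le
    _ = K ^ (1 / (2 * E1)) * ((vu ^ (-η / E1) * vu ^ (η / E1)) *
          (cX ^ (1/2 : ℝ) * ch ^ (E2 / (2 * E1)))) := by ring
    _ = K ^ (1 / (2 * E1)) * (cX ^ (1/2 : ℝ) * (ch ^ (E2 / E1)) ^ (1/2 : ℝ)) := by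
        rw [h3, h4, one_mul]
    _ ≤ K ^ (1 / (2 * E1)) * ((1/2 : ℝ) * cX + (1/2 : ℝ) * ch ^ (E2 / E1)) :=
        mul_le_mul_of_nonneg_left h5 (Real.rpow_nonneg hK _)
    _ = K ^ (1 / (2 * E1)) * cX / 2 + K ^ (1 / (2 * E1)) * ch ^ (E2 / E1) / 2 := by ring

/-- The constant in the per-interval estimate. -/
noncomputable def Cmax (γ γ' η₁ : ℝ) : ℝ :=
  ((2:ℝ) ^ (1 / (γ - η₁)) + (2:ℝ) ^ (1 / (2 * (γ - η₁))) * (2:ℝ) ^ (1 / (2 * (γ - η₁)))) *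
    (2 + 2 * Kc ((γ - η₁) + (γ' - η₁)) ^ (1 / (2 * (γ - η₁))))

set_option maxHeartbeats 2000000 in
lemma key_interval (γ γ' η₁ : ℝ) (hγ'γ : γ ≤ γ') (hη₁ : 0 ≤ η₁) (hη₁γ : η₁ < γ)
    (hσ : 1 < (γ - η₁) + (γ' - η₁))
    (n : ℕ) (X h : ℝ → Fin n → ℝ) (XX Ihh Ihx Ixh : ℝ → ℝ → Fin n → Fin n → ℝ)
    (u v : ℝ) (huv : u < v)
    (hfinX : ctrlW γ η₁ n X XX u v ≠ ⊤) (hfinH : ctrlW γ' η₁ n h Ihh u v ≠ ⊤)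
    (hIhx : HasYoungIntegral n (fun τ => h τ - h u) X u v (Ihx u v))
    (hIxh : HasYoungIntegral n (fun τ => X τ - X u) h u v (Ixh u v)) :
    pw γ η₁ n (fun τ => h τ + X τ) (fun a b => XX a b + Ihh a b + Ihx a b + Ixh a b) u v
      ≤ Cmax γ γ' η₁ *
        ((ctrlW γ η₁ n X XX u v).toReal
          + (ctrlW γ' η₁ n h Ihh u v).toReal ^ ((γ' - η₁) / (γ - η₁))) := by
  have hE1 : 0 < γ - η₁ := by linarith
  have hE2 : 0 < γ' - η₁ := by linarith
  have hvu : 0 < v - u := by linarith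
  have hKc1 : 1 ≤ Kc ((γ - η₁) + (γ' - η₁)) := one_le_Kc hσ
  have hKc0 : 0 ≤ Kc ((γ - η₁) + (γ' - η₁)) := by linarith
  set cX := (ctrlW γ η₁ n X XX u v).toReal with hcXdef
  set ch := (ctrlW γ' η₁ n h Ihh u v).toReal with hchdef
  have hcX0 : 0 ≤ cX := ENNReal.toReal_nonneg
  have hch0 : 0 ≤ ch := ENNReal.toReal_nonneg
  have hchθ0 : 0 ≤ ch ^ ((γ' - η₁) / (γ - η₁)) := Real.rpow_nonneg hch0 _
  have hA0 : 0 < (v - u) ^ (-η₁ / (γ - η₁)) := Real.rpow_pos_of_pos hvu _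
  set Kp := Kc ((γ - η₁) + (γ' - η₁)) ^ (1 / (2 * (γ - η₁))) with hKpdef
  have hKp0 : 0 ≤ Kp := Real.rpow_nonneg hKc0 _
  -- first-level sum hypotheses for the cross integrals
  have hfX : ∀ P : Pt u v, ∑ j : Fin P.m,
      (P.κ j.succ - P.κ j.castSucc) ^ (-(η₁ / (γ - η₁))) *
        ‖X (P.κ j.succ) - X (P.κ j.castSucc)‖ ^ (1 / (γ - η₁)) ≤ cX :=
    fun P => first_level_sum_le hfinX P
  have hgH : ∀ P : Pt u v, ∑ j : Fin P.m,
      (P.κ j.succ - P.κ j.castSucc) ^ (-(η₁ / (γ' - η₁))) *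
        ‖h (P.κ j.succ) - h (P.κ j.castSucc)‖ ^ (1 / (γ' - η₁)) ≤ ch :=
    fun P => first_level_sum_le hfinH P
  -- the two cross integral bounds
  have hIxhB : ‖Ixh u v‖ ≤ Kc ((γ - η₁) + (γ' - η₁)) *
      ((v - u) ^ (2 * η₁) * (cX ^ (γ - η₁) * ch ^ (γ' - η₁))) :=
    cross_integral_bound n X h u v η₁ (γ - η₁) (γ' - η₁) cX ch hη₁ hE1 hE2 hσ huv
      hcX0 hch0 hfX hgH (Ixh u v) hIxh
  have hIhxB : ‖Ihx u v‖ ≤ Kc ((γ - η₁) + (γ' - η₁)) *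
      ((v - u) ^ (2 * η₁) * (cX ^ (γ - η₁) * ch ^ (γ' - η₁))) := by
    have := cross_integral_bound n h X u v η₁ (γ' - η₁) (γ - η₁) ch cX hη₁ hE2 hE1
      (by linarith) huv hch0 hcX0 hgH hfX (Ihx u v) hIhx
    rw [show (γ' - η₁) + (γ - η₁) = (γ - η₁) + (γ' - η₁) by ring,
      mul_comm (ch ^ (γ' - η₁)) (cX ^ (γ - η₁))] at this
    exact this
  -- the h-pair control pieces
  have hH := pw_le_toReal huv hfinH
  unfold pw at hH
  have hH1 : (v - u) ^ (-η₁ / (γ' - η₁)) * ‖h v - h u‖ ^ (1 / (γ' - η₁)) ≤ ch := by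
    have hA'0 : (0:ℝ) ≤ (v - u) ^ (-η₁ / (γ' - η₁)) := Real.rpow_nonneg hvu.le _
    nlinarith [Real.rpow_nonneg (norm_nonneg (Ihh u v)) (1 / (2 * (γ' - η₁))),
      mul_nonneg hA'0 (Real.rpow_nonneg (norm_nonneg (Ihh u v)) (1 / (2 * (γ' - η₁))))]
  have hH2 : (v - u) ^ (-η₁ / (γ' - η₁)) * ‖Ihh u v‖ ^ (1 / (2 * (γ' - η₁))) ≤ ch := by
    have hA'0 : (0:ℝ) ≤ (v - u) ^ (-η₁ / (γ' - η₁)) := Real.rpow_nonneg hvu.le _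
    nlinarith [Real.rpow_nonneg (norm_nonneg (h v - h u)) (1 / (γ' - η₁)),
      mul_nonneg hA'0 (Real.rpow_nonneg (norm_nonneg (h v - h u)) (1 / (γ' - η₁)))]
  -- piece bounds
  have P2 : (v - u) ^ (-η₁ / (γ - η₁)) * ‖h v - h u‖ ^ (1 / (γ - η₁))
      ≤ ch ^ ((γ' - η₁) / (γ - η₁)) :=
    pow_theta_piece hvu (norm_nonneg _) hch0 hE1 hE2
      (by field_simp; try ring) hH1
  have P3 : (v - u) ^ (-η₁ / (γ - η₁)) * ‖Ihh u v‖ ^ (1 / (2 * (γ - η₁)))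
      ≤ ch ^ ((γ' - η₁) / (γ - η₁)) :=
    pow_theta_piece hvu (norm_nonneg _) hch0 hE1 hE2
      (by field_simp; try ring) hH2
  have P4 : (v - u) ^ (-η₁ / (γ - η₁)) * ‖Ixh u v‖ ^ (1 / (2 * (γ - η₁)))
      ≤ Kp * cX / 2 + Kp * ch ^ ((γ' - η₁) / (γ - η₁)) / 2 :=
    cross_piece hvu hE1 hE2 hη₁ hKc0 hcX0 hch0 (norm_nonneg _) hIxhB
  have P5 : (v - u) ^ (-η₁ / (γ - η₁)) * ‖Ihx u v‖ ^ (1 / (2 * (γ - η₁)))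
      ≤ Kp * cX / 2 + Kp * ch ^ ((γ' - η₁) / (γ - η₁)) / 2 :=
    cross_piece hvu hE1 hE2 hη₁ hKc0 hcX0 hch0 (norm_nonneg _) hIhxB
  have hX := pw_le_toReal huv hfinX
  unfold pw at hX
  have P1 : (v - u) ^ (-η₁ / (γ - η₁)) * ‖X v - X u‖ ^ (1 / (γ - η₁))
      + (v - u) ^ (-η₁ / (γ - η₁)) * ‖XX u v‖ ^ (1 / (2 * (γ - η₁))) ≤ cX := by
    rw [← mul_add]
    exact hX
  -- first level bound
  have hW1 : ‖(fun τ => h τ + X τ) v - (fun τ => h τ + X τ) u‖ ^ (1 / (γ - η₁))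
      ≤ (2:ℝ) ^ (1 / (γ - η₁)) *
        (‖h v - h u‖ ^ (1 / (γ - η₁)) + ‖X v - X u‖ ^ (1 / (γ - η₁))) := by
    have hd : (fun τ => h τ + X τ) v - (fun τ => h τ + X τ) u
        = (h v - h u) + (X v - X u) := by
      show (h v + X v) - (h u + X u) = (h v - h u) + (X v - X u)
      abel
    refine le_trans (Real.rpow_le_rpow (norm_nonneg _) ?_ (by positivity))
      (two_rpow_le (norm_nonneg _) (norm_nonneg _) (by positivity))
    rw [hd]
    exact norm_add_le _ _
  -- second level bound
  have hZn : ‖XX u v + Ihh u v + Ihx u v + Ixh u v‖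
      ≤ (‖XX u v‖ + ‖Ihh u v‖) + (‖Ihx u v‖ + ‖Ixh u v‖) := by
    have t1 := norm_add_le (XX u v + Ihh u v + Ihx u v) (Ixh u v)
    have t2 := norm_add_le (XX u v + Ihh u v) (Ihx u v)
    have t3 := norm_add_le (XX u v) (Ihh u v)
    linarith
  have hW2 : ‖XX u v + Ihh u v + Ihx u v + Ixh u v‖ ^ (1 / (2 * (γ - η₁)))
      ≤ (2:ℝ) ^ (1 / (2 * (γ - η₁))) * (2:ℝ) ^ (1 / (2 * (γ - η₁))) *
        (‖XX u v‖ ^ (1 / (2 * (γ - η₁))) + ‖Ihh u v‖ ^ (1 / (2 * (γ - η₁)))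
          + ‖Ihx u v‖ ^ (1 / (2 * (γ - η₁))) + ‖Ixh u v‖ ^ (1 / (2 * (γ - η₁)))) := by
    have e0 : (0:ℝ) ≤ 1 / (2 * (γ - η₁)) := by positivity
    have s1 : ‖XX u v + Ihh u v + Ihx u v + Ixh u v‖ ^ (1 / (2 * (γ - η₁)))
        ≤ ((‖XX u v‖ + ‖Ihh u v‖) + (‖Ihx u v‖ + ‖Ixh u v‖)) ^ (1 / (2 * (γ - η₁))) :=
      Real.rpow_le_rpow (norm_nonneg _) hZn e0
    have s2 := two_rpow_le (x := ‖XX u v‖ + ‖Ihh u v‖) (y := ‖Ihx u v‖ + ‖Ixh u v‖)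
      (by positivity) (by positivity) e0
    have s3 := two_rpow_le (x := ‖XX u v‖) (y := ‖Ihh u v‖)
      (norm_nonneg _) (norm_nonneg _) e0
    have s4 := two_rpow_le (x := ‖Ihx u v‖) (y := ‖Ixh u v‖)
      (norm_nonneg _) (norm_nonneg _) e0
    have c20 : (0:ℝ) ≤ (2:ℝ) ^ (1 / (2 * (γ - η₁))) := Real.rpow_nonneg (by norm_num) _
    calc ‖XX u v + Ihh u v + Ihx u v + Ixh u v‖ ^ (1 / (2 * (γ - η₁)))
        ≤ ((‖XX u v‖ + ‖Ihh u v‖) + (‖Ihx u v‖ + ‖Ixh u v‖)) ^ (1 / (2 * (γ - η₁))) := s1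
      _ ≤ (2:ℝ) ^ (1 / (2 * (γ - η₁))) *
            ((‖XX u v‖ + ‖Ihh u v‖) ^ (1 / (2 * (γ - η₁)))
              + (‖Ihx u v‖ + ‖Ixh u v‖) ^ (1 / (2 * (γ - η₁)))) := s2
      _ ≤ (2:ℝ) ^ (1 / (2 * (γ - η₁))) *
            ((2:ℝ) ^ (1 / (2 * (γ - η₁))) *
                (‖XX u v‖ ^ (1 / (2 * (γ - η₁))) + ‖Ihh u v‖ ^ (1 / (2 * (γ - η₁))))
              + (2:ℝ) ^ (1 / (2 * (γ - η₁))) *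
                (‖Ihx u v‖ ^ (1 / (2 * (γ - η₁))) + ‖Ixh u v‖ ^ (1 / (2 * (γ - η₁))))) :=
          mul_le_mul_of_nonneg_left (add_le_add s3 s4) c20
      _ = (2:ℝ) ^ (1 / (2 * (γ - η₁))) * (2:ℝ) ^ (1 / (2 * (γ - η₁))) *
            (‖XX u v‖ ^ (1 / (2 * (γ - η₁))) + ‖Ihh u v‖ ^ (1 / (2 * (γ - η₁)))
              + ‖Ihx u v‖ ^ (1 / (2 * (γ - η₁))) + ‖Ixh u v‖ ^ (1 / (2 * (γ - η₁)))) := by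
          ring
  -- assemble
  unfold pw
  have step1 : (v - u) ^ (-η₁ / (γ - η₁)) *
      (‖(fun τ => h τ + X τ) v - (fun τ => h τ + X τ) u‖ ^ (1 / (γ - η₁)) +
        ‖XX u v + Ihh u v + Ihx u v + Ixh u v‖ ^ (1 / (2 * (γ - η₁))))
      ≤ (v - u) ^ (-η₁ / (γ - η₁)) *
        ((2:ℝ) ^ (1 / (γ - η₁)) *
          (‖h v - h u‖ ^ (1 / (γ - η₁)) + ‖X v - X u‖ ^ (1 / (γ - η₁)))
        + (2:ℝ) ^ (1 / (2 * (γ - η₁))) * (2:ℝ) ^ (1 / (2 * (γ - η₁))) *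
          (‖XX u v‖ ^ (1 / (2 * (γ - η₁))) + ‖Ihh u v‖ ^ (1 / (2 * (γ - η₁)))
            + ‖Ihx u v‖ ^ (1 / (2 * (γ - η₁))) + ‖Ixh u v‖ ^ (1 / (2 * (γ - η₁))))) :=
    mul_le_mul_of_nonneg_left (add_le_add hW1 hW2) hA0.le
  set Cc := (2:ℝ) ^ (1 / (γ - η₁)) + (2:ℝ) ^ (1 / (2 * (γ - η₁))) * (2:ℝ) ^ (1 / (2 * (γ - η₁))) with hCcdef
  have hc10 : (0:ℝ) ≤ (2:ℝ) ^ (1 / (γ - η₁)) := Real.rpow_nonneg (by norm_num) _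
  have hc20 : (0:ℝ) ≤ (2:ℝ) ^ (1 / (2 * (γ - η₁))) * (2:ℝ) ^ (1 / (2 * (γ - η₁))) :=
    mul_nonneg (Real.rpow_nonneg (by norm_num) _) (Real.rpow_nonneg (by norm_num) _)
  have hCc0 : 0 ≤ Cc := by rw [hCcdef]; positivity
  have hAa1 : 0 ≤ (v - u) ^ (-η₁ / (γ - η₁)) * ‖h v - h u‖ ^ (1 / (γ - η₁)) :=
    mul_nonneg hA0.le (Real.rpow_nonneg (norm_nonneg _) _)
  have hAa2 : 0 ≤ (v - u) ^ (-η₁ / (γ - η₁)) * ‖X v - X u‖ ^ (1 / (γ - η₁)) :=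
    mul_nonneg hA0.le (Real.rpow_nonneg (norm_nonneg _) _)
  have hAb1 : 0 ≤ (v - u) ^ (-η₁ / (γ - η₁)) * ‖XX u v‖ ^ (1 / (2 * (γ - η₁))) :=
    mul_nonneg hA0.le (Real.rpow_nonneg (norm_nonneg _) _)
  have hAb2 : 0 ≤ (v - u) ^ (-η₁ / (γ - η₁)) * ‖Ihh u v‖ ^ (1 / (2 * (γ - η₁))) :=
    mul_nonneg hA0.le (Real.rpow_nonneg (norm_nonneg _) _)
  have hAb3 : 0 ≤ (v - u) ^ (-η₁ / (γ - η₁)) * ‖Ihx u v‖ ^ (1 / (2 * (γ - η₁))) :=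
    mul_nonneg hA0.le (Real.rpow_nonneg (norm_nonneg _) _)
  have hAb4 : 0 ≤ (v - u) ^ (-η₁ / (γ - η₁)) * ‖Ixh u v‖ ^ (1 / (2 * (γ - η₁))) :=
    mul_nonneg hA0.le (Real.rpow_nonneg (norm_nonneg _) _)
  have step2 : (v - u) ^ (-η₁ / (γ - η₁)) *
        ((2:ℝ) ^ (1 / (γ - η₁)) *
          (‖h v - h u‖ ^ (1 / (γ - η₁)) + ‖X v - X u‖ ^ (1 / (γ - η₁)))
        + (2:ℝ) ^ (1 / (2 * (γ - η₁))) * (2:ℝ) ^ (1 / (2 * (γ - η₁))) *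
          (‖XX u v‖ ^ (1 / (2 * (γ - η₁))) + ‖Ihh u v‖ ^ (1 / (2 * (γ - η₁)))
            + ‖Ihx u v‖ ^ (1 / (2 * (γ - η₁))) + ‖Ixh u v‖ ^ (1 / (2 * (γ - η₁)))))
      ≤ Cc * (cX + 2 * ch ^ ((γ' - η₁) / (γ - η₁)) + Kp * cX + Kp * ch ^ ((γ' - η₁) / (γ - η₁))) := by
    have e1 : (2:ℝ) ^ (1 / (γ - η₁)) ≤ Cc := by rw [hCcdef]; linarith
    have e2 : (2:ℝ) ^ (1 / (2 * (γ - η₁))) * (2:ℝ) ^ (1 / (2 * (γ - η₁))) ≤ Cc := by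
      rw [hCcdef]; linarith
    have h12nn : (0:ℝ) ≤ ‖h v - h u‖ ^ (1 / (γ - η₁)) + ‖X v - X u‖ ^ (1 / (γ - η₁)) := by
      positivity
    have hB4nn : (0:ℝ) ≤ ‖XX u v‖ ^ (1 / (2 * (γ - η₁))) + ‖Ihh u v‖ ^ (1 / (2 * (γ - η₁)))
        + ‖Ihx u v‖ ^ (1 / (2 * (γ - η₁))) + ‖Ixh u v‖ ^ (1 / (2 * (γ - η₁))) := by
      positivity
    calc (v - u) ^ (-η₁ / (γ - η₁)) *
        ((2:ℝ) ^ (1 / (γ - η₁)) *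
          (‖h v - h u‖ ^ (1 / (γ - η₁)) + ‖X v - X u‖ ^ (1 / (γ - η₁)))
        + (2:ℝ) ^ (1 / (2 * (γ - η₁))) * (2:ℝ) ^ (1 / (2 * (γ - η₁))) *
          (‖XX u v‖ ^ (1 / (2 * (γ - η₁))) + ‖Ihh u v‖ ^ (1 / (2 * (γ - η₁)))
            + ‖Ihx u v‖ ^ (1 / (2 * (γ - η₁))) + ‖Ixh u v‖ ^ (1 / (2 * (γ - η₁)))))
        ≤ (v - u) ^ (-η₁ / (γ - η₁)) *
          (Cc * (‖h v - h u‖ ^ (1 / (γ - η₁)) + ‖X v - X u‖ ^ (1 / (γ - η₁)))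
          + Cc * (‖XX u v‖ ^ (1 / (2 * (γ - η₁))) + ‖Ihh u v‖ ^ (1 / (2 * (γ - η₁)))
            + ‖Ihx u v‖ ^ (1 / (2 * (γ - η₁))) + ‖Ixh u v‖ ^ (1 / (2 * (γ - η₁))))) :=
          mul_le_mul_of_nonneg_left (add_le_add
            (mul_le_mul_of_nonneg_right e1 h12nn)
            (mul_le_mul_of_nonneg_right e2 hB4nn)) hA0.le
      _ = Cc * ((v - u) ^ (-η₁ / (γ - η₁)) * ‖h v - h u‖ ^ (1 / (γ - η₁))
          + ((v - u) ^ (-η₁ / (γ - η₁)) * ‖X v - X u‖ ^ (1 / (γ - η₁))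
            + (v - u) ^ (-η₁ / (γ - η₁)) * ‖XX u v‖ ^ (1 / (2 * (γ - η₁))))
          + (v - u) ^ (-η₁ / (γ - η₁)) * ‖Ihh u v‖ ^ (1 / (2 * (γ - η₁)))
          + (v - u) ^ (-η₁ / (γ - η₁)) * ‖Ihx u v‖ ^ (1 / (2 * (γ - η₁)))
          + (v - u) ^ (-η₁ / (γ - η₁)) * ‖Ixh u v‖ ^ (1 / (2 * (γ - η₁)))) := by ring
      _ ≤ Cc * (ch ^ ((γ' - η₁) / (γ - η₁)) + cX + ch ^ ((γ' - η₁) / (γ - η₁))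
          + (Kp * cX / 2 + Kp * ch ^ ((γ' - η₁) / (γ - η₁)) / 2)
          + (Kp * cX / 2 + Kp * ch ^ ((γ' - η₁) / (γ - η₁)) / 2)) :=
          mul_le_mul_of_nonneg_left (by linarith) hCc0
      _ = Cc * (cX + 2 * ch ^ ((γ' - η₁) / (γ - η₁)) + Kp * cX
          + Kp * ch ^ ((γ' - η₁) / (γ - η₁))) := by ring
  have step3 : Cc * (cX + 2 * ch ^ ((γ' - η₁) / (γ - η₁)) + Kp * cX
        + Kp * ch ^ ((γ' - η₁) / (γ - η₁)))
      ≤ Cmax γ γ' η₁ * (cX + ch ^ ((γ' - η₁) / (γ - η₁))) := by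
    have hCmax : Cmax γ γ' η₁ = Cc * (2 + 2 * Kp) := by
      rw [Cmax, hCcdef, hKpdef]
    rw [hCmax]
    nlinarith [mul_nonneg hCc0 hcX0, mul_nonneg (mul_nonneg hCc0 hKp0) hcX0,
      mul_nonneg (mul_nonneg hCc0 hKp0) hchθ0, mul_nonneg hCc0 hchθ0]
  exact le_trans step1 (le_trans step2 step3)

lemma Kc_nonneg (σ : ℝ) : 0 ≤ Kc σ := tsum_nonneg fun k => by positivity

lemma Cmax_nonneg {γ γ' η₁ : ℝ} : 0 ≤ Cmax γ γ' η₁ := by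
  have h1 : (0:ℝ) ≤ Kc ((γ - η₁) + (γ' - η₁)) ^ (1 / (2 * (γ - η₁))) :=
    Real.rpow_nonneg (Kc_nonneg _) _
  have h2 : (0:ℝ) ≤ (2:ℝ) ^ (1 / (γ - η₁)) + (2:ℝ) ^ (1 / (2 * (γ - η₁))) *
      (2:ℝ) ^ (1 / (2 * (γ - η₁))) := by positivity
  exact mul_nonneg h2 (by linarith)

end RP

open RP in
/-- translation estimate for the control of a rough path.  Let
`1/3 < γ < 1/2`, `γ' > 0`, `0 ≤ η₁` with `γ + γ' - 2η₁ > 1` and `η₁ < γ`.  Let `X` be a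
`γ`-Hölder path with second level `𝕏` such that `W_{𝐗,γ,η₁}(s,t) < ∞`, and let `h` be a
continuous path of finite `1/γ'`-variation whose Young enhancement
`𝐡 = (h, ∫ h ⊗ dh)` satisfies `W_{𝐡,γ',η₁}(s,t) < ∞`.  Denoting by `Ihh, Ihx, Ixh` the
Young integrals `∫ (h-h_u) ⊗ dh`, `∫ (h-h_u) ⊗ dX`, `∫ (X-X_u) ⊗ dh`, the translated
rough path `T_h(𝐗)` has first level `h + X` and second level
`𝕏_{u,v} + Ihh_{u,v} + Ihx_{u,v} + Ixh_{u,v}`, and there is a constant `C` depending only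
on `γ, γ', η₁` with
`W_{T_h(𝐗),γ,η₁}(s,t) ≤ C [ W_{𝐗,γ,η₁}(s,t) + W_{𝐡,γ',η₁}(s,t)^{(γ'-η₁)/(γ-η₁)} ]`. -/
theorem translation_estimate (γ γ' η₁ : ℝ)
    (hγl : 1 / 3 < γ) (hγu : γ < 1 / 2) (hγ' : 0 < γ') (hη₁ : 0 ≤ η₁)
    (hθ : 1 < γ + γ' - 2 * η₁) (hη₁γ : η₁ < γ) (n : ℕ) :
    ∃ C : ℝ, 0 < C ∧
      ∀ (s t : ℝ), s ≤ t →
      ∀ (X h : ℝ → Fin n → ℝ) (XX Ihh Ihx Ixh : ℝ → ℝ → Fin n → Fin n → ℝ),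
        (∃ K : ℝ, ∀ u v, s ≤ u → u ≤ v → v ≤ t →
          ‖X v - X u‖ ≤ K * (v - u) ^ γ) →
        ContinuousOn h (Set.Icc s t) →
        (∃ V : ℝ, ∀ (m : ℕ) (κ : Fin (m + 1) → ℝ), StrictMono κ → κ 0 = s →
          κ (Fin.last m) = t →
          ∑ j : Fin m, ‖h (κ j.succ) - h (κ j.castSucc)‖ ^ (1 / γ') ≤ V) →
        (∀ u v, s ≤ u → u ≤ v → v ≤ t →
          HasYoungIntegral n (fun τ => h τ - h u) h u v (Ihh u v)) →
        (∀ u v, s ≤ u → u ≤ v → v ≤ t →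
          HasYoungIntegral n (fun τ => h τ - h u) X u v (Ihx u v)) →
        (∀ u v, s ≤ u → u ≤ v → v ≤ t →
          HasYoungIntegral n (fun τ => X τ - X u) h u v (Ixh u v)) →
        ctrlW γ η₁ n X XX s t < ⊤ →
        ctrlW γ' η₁ n h Ihh s t < ⊤ →
        ctrlW γ η₁ n (fun τ => h τ + X τ)
            (fun u v => XX u v + Ihh u v + Ihx u v + Ixh u v) s t ≤
          ENNReal.ofReal C *
            (ctrlW γ η₁ n X XX s t +
              ctrlW γ' η₁ n h Ihh s t ^ ((γ' - η₁) / (γ - η₁))) := by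
  have hE1 : 0 < γ - η₁ := by linarith
  have hγγ' : γ ≤ γ' := by linarith
  have hσ : 1 < (γ - η₁) + (γ' - η₁) := by linarith
  have hθ1 : 1 ≤ (γ' - η₁) / (γ - η₁) := (one_le_div hE1).2 (by linarith)
  have hθ0 : (0:ℝ) ≤ (γ' - η₁) / (γ - η₁) := le_trans zero_le_one hθ1
  refine ⟨max (Cmax γ γ' η₁) 1, lt_of_lt_of_le one_pos (le_max_right _ _), ?_⟩
  intro s t hst X h XX Ihh Ihx Ixh _h1 _h2 _h3 hIhh hIhx hIxh hfinX hfinH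
  have hCnn : (0:ℝ) ≤ max (Cmax γ γ' η₁) 1 := le_trans zero_le_one (le_max_right _ _)
  rw [ctrlW_eq]
  refine iSup_le fun P => ?_
  have hsle : ∀ j : Fin (P.m + 1), s ≤ P.κ j := fun j =>
    calc s = P.κ 0 := P.h0.symm
      _ ≤ P.κ j := P.mono.monotone (Fin.zero_le _)
  have htge : ∀ j : Fin (P.m + 1), P.κ j ≤ t := fun j =>
    calc P.κ j ≤ P.κ (Fin.last P.m) := P.mono.monotone (Fin.le_last _)
      _ = t := P.hl
  have hfinXj : ∀ j : Fin P.m, ctrlW γ η₁ n X XX (P.κ j.castSucc) (P.κ j.succ) ≠ ⊤ :=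
    fun j => ne_top_of_le_ne_top hfinX.ne
      (ctrlW_mono (hsle _) (P.mono ((Fin.castSucc_lt_succ (i := j)))).le (htge _))
  have hfinHj : ∀ j : Fin P.m, ctrlW γ' η₁ n h Ihh (P.κ j.castSucc) (P.κ j.succ) ≠ ⊤ :=
    fun j => ne_top_of_le_ne_top hfinH.ne
      (ctrlW_mono (hsle _) (P.mono ((Fin.castSucc_lt_succ (i := j)))).le (htge _))
  have hkey : ∀ j : Fin P.m,
      pw γ η₁ n (fun τ => h τ + X τ)
        (fun a b => XX a b + Ihh a b + Ihx a b + Ixh a b)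
        (P.κ j.castSucc) (P.κ j.succ)
      ≤ Cmax γ γ' η₁ * ((ctrlW γ η₁ n X XX (P.κ j.castSucc) (P.κ j.succ)).toReal
        + (ctrlW γ' η₁ n h Ihh (P.κ j.castSucc) (P.κ j.succ)).toReal
            ^ ((γ' - η₁) / (γ - η₁))) :=
    fun j => key_interval γ γ' η₁ hγγ' hη₁ hη₁γ hσ n X h XX Ihh Ihx Ixh _ _
      (P.mono ((Fin.castSucc_lt_succ (i := j)))) (hfinXj j) (hfinHj j)
      (hIhx _ _ (hsle _) (P.mono ((Fin.castSucc_lt_succ (i := j)))).le (htge _))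
      (hIxh _ _ (hsle _) (P.mono ((Fin.castSucc_lt_succ (i := j)))).le (htge _))
  have hchainX := ctrlW_chain (β := γ) (η₁ := η₁) (Y := X) (YY := XX) P.m P.κ P.mono
  rw [P.h0, P.hl] at hchainX
  have hchainH := ctrlW_chain (β := γ') (η₁ := η₁) (Y := h) (YY := Ihh) P.m P.κ P.mono
  rw [P.h0, P.hl] at hchainH
  have hSX : ∑ j : Fin P.m, (ctrlW γ η₁ n X XX (P.κ j.castSucc) (P.κ j.succ)).toReal
      ≤ (ctrlW γ η₁ n X XX s t).toReal := by
    rw [← ENNReal.toReal_sum (fun j _ => hfinXj j)]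
    exact ENNReal.toReal_mono hfinX.ne hchainX
  have hSH0 : ∑ j : Fin P.m, (ctrlW γ' η₁ n h Ihh (P.κ j.castSucc) (P.κ j.succ)).toReal
      ≤ (ctrlW γ' η₁ n h Ihh s t).toReal := by
    rw [← ENNReal.toReal_sum (fun j _ => hfinHj j)]
    exact ENNReal.toReal_mono hfinH.ne hchainH
  have hSH : ∑ j : Fin P.m, (ctrlW γ' η₁ n h Ihh (P.κ j.castSucc) (P.κ j.succ)).toReal
        ^ ((γ' - η₁) / (γ - η₁))
      ≤ (ctrlW γ' η₁ n h Ihh s t).toReal ^ ((γ' - η₁) / (γ - η₁)) :=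
    le_trans (sum_rpow_le Finset.univ _ _ hθ1 (fun j _ => ENNReal.toReal_nonneg))
      (Real.rpow_le_rpow (Finset.sum_nonneg fun j _ => ENNReal.toReal_nonneg) hSH0 hθ0)
  have htot : ∑ j : Fin P.m,
      pw γ η₁ n (fun τ => h τ + X τ)
        (fun a b => XX a b + Ihh a b + Ihx a b + Ixh a b)
        (P.κ j.castSucc) (P.κ j.succ)
      ≤ max (Cmax γ γ' η₁) 1 * ((ctrlW γ η₁ n X XX s t).toReal
          + (ctrlW γ' η₁ n h Ihh s t).toReal ^ ((γ' - η₁) / (γ - η₁))) := by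
    have t1 := Finset.sum_le_sum (fun j (_ : j ∈ Finset.univ) => hkey j)
    have t2 : ∑ j : Fin P.m, Cmax γ γ' η₁ *
          ((ctrlW γ η₁ n X XX (P.κ j.castSucc) (P.κ j.succ)).toReal
            + (ctrlW γ' η₁ n h Ihh (P.κ j.castSucc) (P.κ j.succ)).toReal
                ^ ((γ' - η₁) / (γ - η₁)))
        = Cmax γ γ' η₁ *
          ((∑ j : Fin P.m, (ctrlW γ η₁ n X XX (P.κ j.castSucc) (P.κ j.succ)).toReal)
            + ∑ j : Fin P.m, (ctrlW γ' η₁ n h Ihh (P.κ j.castSucc) (P.κ j.succ)).toReal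
                ^ ((γ' - η₁) / (γ - η₁))) := by
      rw [← Finset.mul_sum, Finset.sum_add_distrib]
    have hWnn : (0:ℝ) ≤ (ctrlW γ η₁ n X XX s t).toReal
        + (ctrlW γ' η₁ n h Ihh s t).toReal ^ ((γ' - η₁) / (γ - η₁)) :=
      add_nonneg ENNReal.toReal_nonneg (Real.rpow_nonneg ENNReal.toReal_nonneg _)
    calc ∑ j : Fin P.m, pw γ η₁ n (fun τ => h τ + X τ)
          (fun a b => XX a b + Ihh a b + Ihx a b + Ixh a b)
          (P.κ j.castSucc) (P.κ j.succ)
        ≤ ∑ j : Fin P.m, Cmax γ γ' η₁ *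
            ((ctrlW γ η₁ n X XX (P.κ j.castSucc) (P.κ j.succ)).toReal
              + (ctrlW γ' η₁ n h Ihh (P.κ j.castSucc) (P.κ j.succ)).toReal
                  ^ ((γ' - η₁) / (γ - η₁))) := t1
      _ = _ := t2
      _ ≤ Cmax γ γ' η₁ * ((ctrlW γ η₁ n X XX s t).toReal
            + (ctrlW γ' η₁ n h Ihh s t).toReal ^ ((γ' - η₁) / (γ - η₁))) :=
          mul_le_mul_of_nonneg_left (add_le_add hSX hSH) Cmax_nonneg
      _ ≤ max (Cmax γ γ' η₁) 1 * ((ctrlW γ η₁ n X XX s t).toReal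
            + (ctrlW γ' η₁ n h Ihh s t).toReal ^ ((γ' - η₁) / (γ - η₁))) :=
          mul_le_mul_of_nonneg_right (le_max_left _ _) hWnn
  calc pSum γ η₁ n (fun τ => h τ + X τ)
        (fun u v => XX u v + Ihh u v + Ihx u v + Ixh u v) P
      = ENNReal.ofReal (∑ j : Fin P.m,
          pw γ η₁ n (fun τ => h τ + X τ)
            (fun a b => XX a b + Ihh a b + Ihx a b + Ixh a b)
            (P.κ j.castSucc) (P.κ j.succ)) :=
        (ENNReal.ofReal_sum_of_nonneg
          (fun j _ => pw_nonneg (P.mono ((Fin.castSucc_lt_succ (i := j)))).le)).symm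
    _ ≤ ENNReal.ofReal (max (Cmax γ γ' η₁) 1 * ((ctrlW γ η₁ n X XX s t).toReal
          + (ctrlW γ' η₁ n h Ihh s t).toReal ^ ((γ' - η₁) / (γ - η₁)))) :=
        ENNReal.ofReal_le_ofReal htot
    _ = ENNReal.ofReal (max (Cmax γ γ' η₁) 1) *
          ENNReal.ofReal ((ctrlW γ η₁ n X XX s t).toReal
            + (ctrlW γ' η₁ n h Ihh s t).toReal ^ ((γ' - η₁) / (γ - η₁))) :=
        ENNReal.ofReal_mul hCnn
    _ ≤ ENNReal.ofReal (max (Cmax γ γ' η₁) 1) *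
          (ctrlW γ η₁ n X XX s t +
            ctrlW γ' η₁ n h Ihh s t ^ ((γ' - η₁) / (γ - η₁))) := by
        refine mul_le_mul_right ?_ _
        rw [ENNReal.ofReal_add ENNReal.toReal_nonneg
          (Real.rpow_nonneg ENNReal.toReal_nonneg _)]
        refine add_le_add ENNReal.ofReal_toReal_le ?_
        rw [ENNReal.toReal_rpow]
        exact ENNReal.ofReal_toReal_le
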